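/- Let (W,S) be a finite crystallographic Coxeter system and (W',S') a parabolic subsystem with root subsystem Δ'. Then the extended Bruhat graph Γ(W',S') is a subgraph of Γ(W,S) under the inclusion W' → W; moreover, if for v,w ∈ W' there is a quantum arrow v →_e w in Γ(W,S), i.e. w = v s_γ for some positive root γ of Δ with l(w) = l(v) − 2(ρ,γ∨) + 1, then γ lies in Δ' and this arrow already belongs to Γ(W',S'). -/

import Mathlib

open scoped BigOperators Classical

noncomputable section

/-- The simple root `α_s` realized as a basis vector of `B → ℝ`. -/
def alr {B : Type} [DecidableEq B] (s : B) : B → ℝ := Pi.single s 1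

/-- A geometric realization of a finite Coxeter system `(W,S)`:  the vector space `V`
is `B → ℝ`, with the simple root `α_s` realized as the basis vector `alr s`;
the symmetric bilinear form satisfies `(α_s, α_t) = -cos (π / m(s,t)) √((α_s,α_s)(α_t,α_t))`
(so that each simple root may be rescaled, e.g. by a crystallographic normalization);
`σ` is the geometric representation and `refl` assigns to every root `γ = w(α_s)` the
reflection `s_γ = w s w⁻¹`. -/
structure GeomCoxeterSystem (B : Type) [Fintype B] [DecidableEq B]
    (W : Type) [Group W] where
  M : CoxeterMatrix B
  cs : CoxeterSystem M W
  finW : Finite W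
  bil : (B → ℝ) →ₗ[ℝ] (B → ℝ) →ₗ[ℝ] ℝ
  bil_symm : ∀ u v, bil u v = bil v u
  bil_diag_pos : ∀ s : B, 0 < bil (alr s) (alr s)
  bil_offdiag : ∀ s t : B, s ≠ t →
    bil (alr s) (alr t) =
      -Real.cos (Real.pi / (M s t)) *
        Real.sqrt (bil (alr s) (alr s) * bil (alr t) (alr t))
  σ : W →* ((B → ℝ) ≃ₗ[ℝ] (B → ℝ))
  σ_simple : ∀ (s : B) (v : B → ℝ),
    σ (cs.simple s) v =
      v - (2 * bil (alr s) v / bil (alr s) (alr s)) • alr s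
  refl : (B → ℝ) → W
  refl_spec : ∀ (w : W) (s : B), refl (σ w (alr s)) = w * cs.simple s * w⁻¹

namespace GeomCoxeterSystem

variable {B : Type} [Fintype B] [DecidableEq B] {W : Type} [Group W]
variable (g : GeomCoxeterSystem B W)


/-- The root system `Δ` of `(W,S)`. -/
def roots : Set (B → ℝ) := Set.range fun p : W × B => g.σ p.1 (alr p.2)

/-- The positive roots `Δ₊`. -/
def posRoots : Set (B → ℝ) := {v ∈ g.roots | ∀ s, 0 ≤ v s}

/-- `(W,S)` is crystallographic: the (normalized) root system satisfies
`2(γ,γ')/(γ,γ) ∈ ℤ` for all roots `γ, γ'`. -/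
def IsCrystallographic : Prop :=
  ∀ γ ∈ g.roots, ∀ γ' ∈ g.roots, ∃ k : ℤ, 2 * g.bil γ γ' / g.bil γ γ = (k : ℝ)

/-- The generator `[γ]` of the free algebra when `γ` is a root (and `0` otherwise). -/
def brkF (v : B → ℝ) : FreeAlgebra ℝ g.roots :=
  if h : v ∈ g.roots then FreeAlgebra.ι ℝ (⟨v, h⟩ : g.roots) else 0

/-- `γ : ℤ → V` lists (cyclically, with `γ_{j+m} = -γ_j`) the positive roots
`γ_0, …, γ_{m-1}` of a rank-two root subsystem of type `I₂(m)`, ordered so that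
`ℝ_{≥0}⟨γ_i, γ_{i+1}⟩ ∩ Δ₊ = {γ_i, γ_{i+1}}`. -/
structure IsChain (m : ℕ) (γ : ℤ → (B → ℝ)) : Prop where
  two_le : 2 ≤ m
  anti : ∀ j : ℤ, γ (j + m) = -γ j
  mem_pos : ∀ i : ℤ, 0 ≤ i → i < m → γ i ∈ g.posRoots
  inj : ∀ i j : ℤ, 0 ≤ i → i < m → 0 ≤ j → j < m → γ i = γ j → i = j
  indep : LinearIndependent ℝ ![γ 0, γ 1]
  cone : ∀ i : ℤ, 0 ≤ i → i ≤ (m : ℤ) - 2 →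
    {v | v ∈ g.posRoots ∧ ∃ a b : ℝ, 0 ≤ a ∧ 0 ≤ b ∧ v = a • γ i + b • γ (i + 1)} =
      {γ i, γ (i + 1)}
  closed : ∀ v ∈ g.roots, v ∈ Submodule.span ℝ {γ 0, γ 1} → ∃ j : ℤ, v = γ j

/-- The ordered product `[γ_0][γ_1]⋯[γ_{l-1}]` in the free algebra. -/
def chainProd (γ : ℤ → (B → ℝ)) (l : ℕ) : FreeAlgebra ℝ g.roots :=
  ((List.range l).map fun i => g.brkF (γ i)).prod

/-- The reversed product `[γ_{l-1}]⋯[γ_1][γ_0]` in the free algebra. -/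
def chainProdRev (γ : ℤ → (B → ℝ)) (l : ℕ) : FreeAlgebra ℝ g.roots :=
  (((List.range l).reverse).map fun i => g.brkF (γ i)).prod

/-- The defining relations (i)–(iv) of the bracket algebra `BE(W,S)`. -/
inductive BRel : FreeAlgebra ℝ g.roots → FreeAlgebra ℝ g.roots → Prop
  | neg (γ : B → ℝ) (h : γ ∈ g.roots) : BRel (g.brkF (-γ)) (-(g.brkF γ))
  | sq (γ : B → ℝ) (h : γ ∈ g.roots) : BRel (g.brkF γ * g.brkF γ) 0
  | quad (m : ℕ) (γ : ℤ → (B → ℝ)) (hc : g.IsChain m γ) (k : ℕ) (hk1 : 1 ≤ k)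
      (hk2 : 2 * k ≤ m) :
      BRel (∑ i ∈ Finset.range (m + 1), g.brkF (γ i) * g.brkF (γ (i + k))) 0
  | fourTerm (m : ℕ) (γ : ℤ → (B → ℝ)) (hc : g.IsChain m γ) (hm : 4 ≤ m) :
      BRel (g.brkF (γ (m / 2 - 1)) * g.chainProd γ (2 * (m / 2 - 1) + 1)
          + g.chainProd γ (2 * (m / 2 - 1) + 1) * g.brkF (γ (m / 2 - 1))
          + g.brkF (γ (m / 2 - 1)) * g.chainProdRev γ (2 * (m / 2 - 1) + 1)
          + g.chainProdRev γ (2 * (m / 2 - 1) + 1) * g.brkF (γ (m / 2 - 1))) 0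

/-- The bracket algebra `BE(W,S)`. -/
def BE : Type := RingQuot g.BRel

instance : Ring g.BE := inferInstanceAs (Ring (RingQuot g.BRel))
instance : Algebra ℝ g.BE := inferInstanceAs (Algebra ℝ (RingQuot g.BRel))

/-- The element `[γ]` of the bracket algebra `BE(W,S)`. -/
def brk (v : B → ℝ) : g.BE := RingQuot.mkAlgHom ℝ g.BRel (g.brkF v)

/-- Only the relations (i)–(iii): the quotient used to check that commutativity of
Dunkl elements only uses the quadratic relations. -/
inductive BRel3 : FreeAlgebra ℝ g.roots → FreeAlgebra ℝ g.roots → Prop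
  | neg (γ : B → ℝ) (h : γ ∈ g.roots) : BRel3 (g.brkF (-γ)) (-(g.brkF γ))
  | sq (γ : B → ℝ) (h : γ ∈ g.roots) : BRel3 (g.brkF γ * g.brkF γ) 0
  | quad (m : ℕ) (γ : ℤ → (B → ℝ)) (hc : g.IsChain m γ) (k : ℕ) (hk1 : 1 ≤ k)
      (hk2 : 2 * k ≤ m) :
      BRel3 (∑ i ∈ Finset.range (m + 1), g.brkF (γ i) * g.brkF (γ (i + k))) 0

/-- The algebra defined by the relations (i)–(iii) only. -/
def BE3 : Type := RingQuot g.BRel3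

instance : Ring g.BE3 := inferInstanceAs (Ring (RingQuot g.BRel3))
instance : Algebra ℝ g.BE3 := inferInstanceAs (Algebra ℝ (RingQuot g.BRel3))

def brk3 (v : B → ℝ) : g.BE3 := RingQuot.mkAlgHom ℝ g.BRel3 (g.brkF v)

/-- `⟨ω_s, γ∨⟩`, the pairing of the fundamental weight `ω_s` with the coroot
`γ∨ = 2γ/(γ,γ)`; in the coordinates of the basis of simple roots this equals
`γ_s (α_s, α_s) / (γ, γ)`. -/
def chevCoeff (s : B) (γ : B → ℝ) : ℝ :=
  γ s * g.bil (alr s) (alr s) / g.bil γ γ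

/-- The Chevalley element `η_s = Σ_{γ ∈ Δ₊} ⟨ω_s, γ∨⟩ [γ]` of `BE(W,S)`. -/
def eta (s : B) : g.BE := ∑ᶠ γ ∈ g.posRoots, g.chevCoeff s γ • g.brk γ

/-- The Dunkl element `θ_s = Σ_{s'} (α_s, α_{s'}) η_{s'}` of `BE(W,S)`. -/
def dunkl (s : B) : g.BE := ∑ s' : B, g.bil (alr s) (alr s') • g.eta s'

def eta3 (s : B) : g.BE3 := ∑ᶠ γ ∈ g.posRoots, g.chevCoeff s γ • g.brk3 γ

def dunkl3 (s : B) : g.BE3 := ∑ s' : B, g.bil (alr s) (alr s') • g.eta3 s'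

/-! ### Quantization -/

/-- The coefficient ring `ℝ[q_s : s ∈ S]`. -/
abbrev QR (B : Type) : Type := MvPolynomial B ℝ

/-- `q_γ = q_s` for a simple root `γ = α_s` (junk value `1` otherwise). -/
def qOf (v : B → ℝ) : QR B :=
  if h : ∃ s : B, v = alr s then MvPolynomial.X h.choose else 1

/-- The half-sum `ρ` of the positive roots. -/
def rho : B → ℝ := (2⁻¹ : ℝ) • ∑ᶠ γ ∈ g.posRoots, γ

/-- `(ρ, γ∨) = 2(ρ,γ)/(γ,γ)`. -/
def pairRho (γ : B → ℝ) : ℝ := 2 * g.bil g.rho γ / g.bil γ γ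

/-- The generator `[γ]` in the free algebra over `ℝ[q_s]`. -/
def qbrkF (v : B → ℝ) : FreeAlgebra (QR B) g.roots :=
  if h : v ∈ g.roots then FreeAlgebra.ι (QR B) (⟨v, h⟩ : g.roots) else 0

def qchainProd (γ : ℤ → (B → ℝ)) (l : ℕ) : FreeAlgebra (QR B) g.roots :=
  ((List.range l).map fun i => g.qbrkF (γ i)).prod

def qchainProdRev (γ : ℤ → (B → ℝ)) (l : ℕ) : FreeAlgebra (QR B) g.roots :=
  (((List.range l).reverse).map fun i => g.qbrkF (γ i)).prod

/-- The defining relations (i)'–(iv)' of the quantized bracket algebra `qBE(W,S)`. -/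
inductive QRel : FreeAlgebra (QR B) g.roots → FreeAlgebra (QR B) g.roots → Prop
  | neg (γ : B → ℝ) (h : γ ∈ g.roots) : QRel (g.qbrkF (-γ)) (-(g.qbrkF γ))
  | sqSimple (s : B) :
      QRel (g.qbrkF (alr s) * g.qbrkF (alr s)) (algebraMap (QR B) _ (MvPolynomial.X s))
  | sqPos (γ : B → ℝ) (h : γ ∈ g.posRoots) (hs : ∀ s : B, γ ≠ alr s) :
      QRel (g.qbrkF γ * g.qbrkF γ) 0
  | quad (m : ℕ) (γ : ℤ → (B → ℝ)) (hc : g.IsChain m γ) (k : ℕ) (hk1 : 1 ≤ k)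
      (hk2 : 2 * k ≤ m) :
      QRel (∑ i ∈ Finset.range (m + 1), g.qbrkF (γ i) * g.qbrkF (γ (i + k))) 0
  | fourTerm (m : ℕ) (γ : ℤ → (B → ℝ)) (hc : g.IsChain m γ) (hm : 4 ≤ m)
      (hl : (g.cs.length (g.refl (γ (m / 2 - 1))) : ℝ) ≠ 2 * g.pairRho (γ (m / 2 - 1)) - 1) :
      QRel (g.qbrkF (γ (m / 2 - 1)) * g.qchainProd γ (2 * (m / 2 - 1) + 1)
          + g.qchainProd γ (2 * (m / 2 - 1) + 1) * g.qbrkF (γ (m / 2 - 1))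
          + g.qbrkF (γ (m / 2 - 1)) * g.qchainProdRev γ (2 * (m / 2 - 1) + 1)
          + g.qchainProdRev γ (2 * (m / 2 - 1) + 1) * g.qbrkF (γ (m / 2 - 1))) 0

/-- The quantized bracket algebra `qBE(W,S)`. -/
def qBE : Type := RingQuot g.QRel

instance : Ring g.qBE := inferInstanceAs (Ring (RingQuot g.QRel))
instance : Algebra (QR B) g.qBE := inferInstanceAs (Algebra (QR B) (RingQuot g.QRel))

/-- The element `[γ]` of `qBE(W,S)`. -/
def qbrk (v : B → ℝ) : g.qBE := RingQuot.mkAlgHom (QR B) g.QRel (g.qbrkF v)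

/-- The quantum Chevalley element `η̃_s`. -/
def qeta (s : B) : g.qBE :=
  ∑ᶠ γ ∈ g.posRoots, (MvPolynomial.C (g.chevCoeff s γ) : QR B) • g.qbrk γ

/-- The quantum Dunkl element `θ̃_s`. -/
def qdunkl (s : B) : g.qBE :=
  ∑ s' : B, (MvPolynomial.C (g.bil (alr s) (alr s')) : QR B) • g.qeta s'

/-! ### Operators: divided differences and (quantum) Bruhat operators -/

/-- The action of `w ∈ W` on polynomial functions on `V`: `(w·f)(v) = f(σ(w⁻¹)v)`. -/
def polyAct (w : W) : MvPolynomial B ℝ →ₐ[ℝ] MvPolynomial B ℝ :=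
  MvPolynomial.aeval fun s => ∑ s' : B, MvPolynomial.C ((g.σ w⁻¹ (alr s')) s) * MvPolynomial.X s'

/-- The linear polynomial `v ↦ (γ, v)`, i.e. `γ` regarded as an element of `S(V*)`
via the bilinear form. -/
def linPoly (γ : B → ℝ) : MvPolynomial B ℝ :=
  ∑ s : B, MvPolynomial.C (g.bil γ (alr s)) * MvPolynomial.X s

/-- The divided difference (Demazure) operator `∂_γ = (1 - s_γ)/γ` on `S(V*)`. -/
def divDiff (γ : B → ℝ) (f : MvPolynomial B ℝ) : MvPolynomial B ℝ :=
  if h : ∃ q, f - g.polyAct (g.refl γ) f = g.linPoly γ * q then h.choose else 0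

/-- The Bruhat operator `s_γ` on the group ring `ℝ⟨W⟩`: `w ↦ w s_γ` if
`l(w s_γ) = l(w) + 1` and `w ↦ 0` otherwise. -/
def bruhatOp (γ : B → ℝ) : MonoidAlgebra ℝ W →ₗ[ℝ] MonoidAlgebra ℝ W :=
  (MonoidAlgebra.coeffLinearEquiv ℝ).symm.toLinearMap ∘ₗ (Finsupp.lsum ℝ fun w =>
    if g.cs.length (w * g.refl γ) = g.cs.length w + 1
    then Finsupp.lsingle (w * g.refl γ) else 0) ∘ₗ (MonoidAlgebra.coeffLinearEquiv ℝ).toLinearMap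

/-- `q_{γ∨} = Π_s q_s^{n_s}` where `γ∨ = Σ_s n_s α_s∨`. -/
def qCoroot (γ : B → ℝ) : QR B :=
  ∏ s : B, MvPolynomial.X s ^ ⌊g.chevCoeff s γ⌋₊

/-- The quantum Bruhat operator `s̃_γ` on the group ring `ℝ[q_s]⟨W⟩`. -/
def qBruhatOp (γ : B → ℝ) : MonoidAlgebra (QR B) W →ₗ[QR B] MonoidAlgebra (QR B) W :=
  (MonoidAlgebra.coeffLinearEquiv (QR B)).symm.toLinearMap ∘ₗ (Finsupp.lsum (QR B) fun w =>
    if g.cs.length (w * g.refl γ) = g.cs.length w + 1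
    then Finsupp.lsingle (w * g.refl γ)
    else if (g.cs.length w : ℝ) = g.cs.length (w * g.refl γ) + 2 * g.pairRho γ - 1
    then g.qCoroot γ • Finsupp.lsingle (w * g.refl γ)
    else 0) ∘ₗ (MonoidAlgebra.coeffLinearEquiv (QR B)).toLinearMap

/-- The ideal `I_W ⊂ S(V*)` generated by the `W`-invariant polynomials without
constant term. -/
def invIdeal : Ideal (MvPolynomial B ℝ) :=
  Ideal.span {f | (∀ w : W, g.polyAct w f = f) ∧ MvPolynomial.constantCoeff f = 0}

/-! ### Bruhat graph arrows -/

/-- An arrow `v → w` of the (extended) Bruhat graph:  `w = v s_γ` with `γ > 0` and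
`l(w) = l(v) + 1`. -/
def coverArrow (v w : W) : Prop :=
  ∃ γ ∈ g.posRoots, w = v * g.refl γ ∧ g.cs.length w = g.cs.length v + 1

/-- A quantum arrow `v →_e w` (labelled by the positive root `γ`) of the extended
Bruhat graph: `w = v s_γ` and `l(w) = l(v) - 2(ρ,γ∨) + 1`. -/
def qArrow (γ : B → ℝ) (v w : W) : Prop :=
  γ ∈ g.posRoots ∧ w = v * g.refl γ ∧
    (g.cs.length w : ℝ) = (g.cs.length v : ℝ) - 2 * g.pairRho γ + 1

/-! ### Bernstein–Gelfand–Gelfand polynomials and substitution operators -/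

/-- The longest element `w₀` of `W`. -/
def w0 : W :=
  haveI := g.finW
  (Finite.exists_max g.cs.length).choose

/-- A choice of reduced word for `w`. -/
def chooseWord (w : W) : List B := (g.cs.exists_reduced_word w).choose

/-- `X_{w₀} = |W|⁻¹ Π_{γ ∈ Δ₊} γ`. -/
def XwTop : MvPolynomial B ℝ :=
  MvPolynomial.C ((Nat.card W : ℝ)⁻¹) * ∏ᶠ γ ∈ g.posRoots, g.linPoly γ

/-- The composition of divided difference operators along a word. -/
def applyWord (l : List B) (f : MvPolynomial B ℝ) : MvPolynomial B ℝ :=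
  l.foldr (fun s q => g.divDiff (alr s) q) f

/-- The Bernstein–Gelfand–Gelfand polynomial `X_w = ∂_{w⁻¹w₀} X_{w₀}`. -/
def Xw (w : W) : MvPolynomial B ℝ := g.applyWord (g.chooseWord (w⁻¹ * g.w0)) g.XwTop

/-- `X_w` regarded as a polynomial with coefficients in `ℝ[q_s]`. -/
def XwR (w : W) : MvPolynomial B (QR B) :=
  MvPolynomial.map (algebraMap ℝ (QR B)) (g.Xw w)

/-- The operator on `ℝ[q_s]⟨W⟩` corresponding to the quantum Chevalley element `η̃_s`
via the quantum Bruhat representation. -/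
def opEta (s : B) : Module.End (QR B) (MonoidAlgebra (QR B) W) :=
  ∑ᶠ γ ∈ g.posRoots, (MvPolynomial.C (g.chevCoeff s γ) : QR B) • g.qBruhatOp γ

/-- The operator corresponding to the coordinate function `X_s = (2/(α_s,α_s)) ω_s`
under the substitution `ω_s ↦ η̃_s`. -/
def opX (s : B) : Module.End (QR B) (MonoidAlgebra (QR B) W) :=
  (MvPolynomial.C (2 / g.bil (alr s) (alr s)) : QR B) • g.opEta s

/-- The ordered product `Π_s F(s)^(m s)` (ascending order of `B`). -/
def monProd [LinearOrder B] (F : B → Module.End (QR B) (MonoidAlgebra (QR B) W))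
    (m : B →₀ ℕ) : Module.End (QR B) (MonoidAlgebra (QR B) W) :=
  ((Finset.univ.sort (α := B) (· ≤ ·)).map fun s => F s ^ m s).prod

/-- The operator `[f]` on `ℝ[q_s]⟨W⟩` obtained from `f ∈ S(V*) ⊗ ℝ[q_s]` by the
substitution `ω_s ↦ η̃_s` (and the quantum Bruhat representation); since the
operators `η̃_s` pairwise commute, the ordered products below realize exactly the
substitution of the commuting elements `η̃_s` into `f`. -/
def substOp [LinearOrder B] (f : MvPolynomial B (QR B)) :
    Module.End (QR B) (MonoidAlgebra (QR B) W) :=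
  ∑ m ∈ f.support, f.coeff m • monProd g.opX m

/-! ### The twisted group algebra `BE(W,S){W}` -/

/-- Generators `[γ]` inside the free algebra on `Δ ⊕ W`. -/
def tbrkF (v : B → ℝ) : FreeAlgebra ℝ (g.roots ⊕ W) :=
  if h : v ∈ g.roots then FreeAlgebra.ι ℝ (Sum.inl (⟨v, h⟩ : g.roots)) else 0

/-- Group-like generators `w ∈ W` inside the free algebra on `Δ ⊕ W`. -/
def tgrpF (w : W) : FreeAlgebra ℝ (g.roots ⊕ W) := FreeAlgebra.ι ℝ (Sum.inr w)

def tchainProd (γ : ℤ → (B → ℝ)) (l : ℕ) : FreeAlgebra ℝ (g.roots ⊕ W) :=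
  ((List.range l).map fun i => g.tbrkF (γ i)).prod

def tchainProdRev (γ : ℤ → (B → ℝ)) (l : ℕ) : FreeAlgebra ℝ (g.roots ⊕ W) :=
  (((List.range l).reverse).map fun i => g.tbrkF (γ i)).prod

/-- The defining relations of the twisted group algebra `BE(W,S){W}`:  the relations
of `BE(W,S)`, the group relations of `W`, and the commutation rule
`w [γ] = [w(γ)] w`. -/
inductive TRel : FreeAlgebra ℝ (g.roots ⊕ W) → FreeAlgebra ℝ (g.roots ⊕ W) → Prop
  | neg (γ : B → ℝ) (h : γ ∈ g.roots) : TRel (g.tbrkF (-γ)) (-(g.tbrkF γ))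
  | sq (γ : B → ℝ) (h : γ ∈ g.roots) : TRel (g.tbrkF γ * g.tbrkF γ) 0
  | quad (m : ℕ) (γ : ℤ → (B → ℝ)) (hc : g.IsChain m γ) (k : ℕ) (hk1 : 1 ≤ k)
      (hk2 : 2 * k ≤ m) :
      TRel (∑ i ∈ Finset.range (m + 1), g.tbrkF (γ i) * g.tbrkF (γ (i + k))) 0
  | fourTerm (m : ℕ) (γ : ℤ → (B → ℝ)) (hc : g.IsChain m γ) (hm : 4 ≤ m) :
      TRel (g.tbrkF (γ (m / 2 - 1)) * g.tchainProd γ (2 * (m / 2 - 1) + 1)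
          + g.tchainProd γ (2 * (m / 2 - 1) + 1) * g.tbrkF (γ (m / 2 - 1))
          + g.tbrkF (γ (m / 2 - 1)) * g.tchainProdRev γ (2 * (m / 2 - 1) + 1)
          + g.tchainProdRev γ (2 * (m / 2 - 1) + 1) * g.tbrkF (γ (m / 2 - 1))) 0
  | grpMul (w v : W) : TRel (g.tgrpF w * g.tgrpF v) (g.tgrpF (w * v))
  | grpOne : TRel (g.tgrpF 1) 1
  | comm (w : W) (γ : B → ℝ) (h : γ ∈ g.roots) :
      TRel (g.tgrpF w * g.tbrkF γ) (g.tbrkF (g.σ w γ) * g.tgrpF w)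

/-- The twisted group algebra `BE(W,S){W}`. -/
def TwBE : Type := RingQuot g.TRel

instance : Ring g.TwBE := inferInstanceAs (Ring (RingQuot g.TRel))
instance : Algebra ℝ g.TwBE := inferInstanceAs (Algebra ℝ (RingQuot g.TRel))

/-- The element `[γ]` of `BE(W,S){W}`. -/
def tbrk (v : B → ℝ) : g.TwBE := RingQuot.mkAlgHom ℝ g.TRel (g.tbrkF v)

/-- The element `w` of `BE(W,S){W}`. -/
def tgrp (w : W) : g.TwBE := RingQuot.mkAlgHom ℝ g.TRel (g.tgrpF w)

end GeomCoxeterSystem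

/-! ### Auxiliary development -/

set_option linter.unusedSectionVars false

namespace GeomCoxeterSystem

variable {B : Type} [Fintype B] [DecidableEq B] {W : Type} [Group W] (g : GeomCoxeterSystem B W)

lemma alr_apply (i b : B) : alr i b = if b = i then 1 else 0 := by
  simp [alr, Pi.single_apply]

@[simp] lemma alr_self (i : B) : alr i i = 1 := by simp [alr]

lemma alr_ne (i b : B) (h : b ≠ i) : alr i b = 0 := by simp [alr, Pi.single_apply, h]

lemma bil_sigma_simple_eq (i : B) (u v : B → ℝ) :
    g.bil (g.σ (g.cs.simple i) u) (g.σ (g.cs.simple i) v) = g.bil u v := by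
  have ha : g.bil (alr i) (alr i) ≠ 0 := ne_of_gt (g.bil_diag_pos i)
  rw [g.σ_simple, g.σ_simple]
  simp only [map_sub, map_smul, LinearMap.sub_apply, LinearMap.smul_apply, smul_eq_mul]
  rw [g.bil_symm u (alr i)]
  field_simp
  ring

lemma bil_sigma_eq (w : W) (u v : B → ℝ) :
    g.bil (g.σ w u) (g.σ w v) = g.bil u v := by
  induction w using g.cs.simple_induction generalizing u v with
  | simple i => exact g.bil_sigma_simple_eq i u v
  | one => simp
  | mul w w' hw hw' =>
      have h : ∀ x : B → ℝ, g.σ (w * w') x = g.σ w (g.σ w' x) := by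
        intro x; rw [map_mul]; rfl
      rw [h, h, hw, hw']

lemma sigma_mul_apply (w w' : W) (v : B → ℝ) :
    g.σ (w * w') v = g.σ w (g.σ w' v) := by rw [map_mul]; rfl

lemma sigma_inv_apply (w : W) (v : B → ℝ) : g.σ w (g.σ w⁻¹ v) = v := by
  rw [← g.sigma_mul_apply, mul_inv_cancel, map_one]; rfl

lemma sigma_inv_apply' (w : W) (v : B → ℝ) : g.σ w⁻¹ (g.σ w v) = v := by
  rw [← g.sigma_mul_apply, inv_mul_cancel, map_one]; rfl

lemma mem_roots_iff (γ : B → ℝ) : γ ∈ g.roots ↔ ∃ (w : W) (i : B), g.σ w (alr i) = γ := by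
  constructor
  · rintro ⟨⟨w, i⟩, h⟩; exact ⟨w, i, h⟩
  · rintro ⟨w, i, h⟩; exact ⟨(w, i), h⟩

lemma alr_mem_roots (i : B) : alr i ∈ g.roots :=
  (g.mem_roots_iff _).2 ⟨1, i, by simp⟩

lemma sigma_mem_roots {γ : B → ℝ} (hγ : γ ∈ g.roots) (w : W) : g.σ w γ ∈ g.roots := by
  obtain ⟨u, i, rfl⟩ := (g.mem_roots_iff _).1 hγ
  exact (g.mem_roots_iff _).2 ⟨w * u, i, g.sigma_mul_apply w u (alr i)⟩

lemma bil_root_self_pos {γ : B → ℝ} (hγ : γ ∈ g.roots) : 0 < g.bil γ γ := by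
  obtain ⟨u, i, rfl⟩ := (g.mem_roots_iff _).1 hγ
  rw [g.bil_sigma_eq]
  exact g.bil_diag_pos i

lemma root_ne_zero {γ : B → ℝ} (hγ : γ ∈ g.roots) : γ ≠ 0 := by
  intro h
  have h2 := g.bil_root_self_pos hγ
  rw [h] at h2
  simp at h2

lemma sigma_simple_self (i : B) : g.σ (g.cs.simple i) (alr i) = -(alr i) := by
  rw [g.σ_simple, mul_div_assoc, div_self (ne_of_gt (g.bil_diag_pos i)), mul_one]
  module

lemma neg_mem_roots {γ : B → ℝ} (hγ : γ ∈ g.roots) : -γ ∈ g.roots := by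
  obtain ⟨u, i, rfl⟩ := (g.mem_roots_iff _).1 hγ
  refine (g.mem_roots_iff _).2 ⟨u * g.cs.simple i, i, ?_⟩
  rw [g.sigma_mul_apply, g.sigma_simple_self, map_neg]

lemma sigma_refl_apply {γ : B → ℝ} (hγ : γ ∈ g.roots) (v : B → ℝ) :
    g.σ (g.refl γ) v = v - (2 * g.bil γ v / g.bil γ γ) • γ := by
  obtain ⟨u, i, rfl⟩ := (g.mem_roots_iff _).1 hγ
  rw [g.refl_spec u i]
  rw [g.sigma_mul_apply, g.sigma_mul_apply, g.σ_simple]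
  rw [map_sub, map_smul, g.sigma_inv_apply]
  congr 2
  · rw [← g.bil_sigma_eq u (alr i) (g.σ u⁻¹ v), g.sigma_inv_apply, g.bil_sigma_eq]

lemma refl_mul_self {γ : B → ℝ} (hγ : γ ∈ g.roots) : g.refl γ * g.refl γ = 1 := by
  obtain ⟨u, i, rfl⟩ := (g.mem_roots_iff _).1 hγ
  rw [g.refl_spec u i]
  have h : (u * g.cs.simple i * u⁻¹) * (u * g.cs.simple i * u⁻¹)
      = u * (g.cs.simple i * g.cs.simple i) * u⁻¹ := by group
  rw [h, g.cs.simple_mul_simple_self, mul_one, mul_inv_cancel]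

lemma sigma_refl_self {γ : B → ℝ} (hγ : γ ∈ g.roots) : g.σ (g.refl γ) γ = -γ := by
  rw [g.sigma_refl_apply hγ, mul_div_assoc, div_self (ne_of_gt (g.bil_root_self_pos hγ)),
    mul_one]
  module

end GeomCoxeterSystem

namespace GeomCoxeterSystem

variable {B : Type} [Fintype B] [DecidableEq B] {W : Type} [Group W] (g : GeomCoxeterSystem B W)

lemma bil_combo (i j : B) (a b : ℝ) :
    g.bil (alr i) (a • alr i + b • alr j)
      = a * g.bil (alr i) (alr i) + b * g.bil (alr i) (alr j) := by
  simp [mul_comm]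

lemma sigma_simple_combo (i j : B) (a b : ℝ) :
    g.σ (g.cs.simple i) (a • alr i + b • alr j)
      = (-a - 2*b*(g.bil (alr i) (alr j)) / (g.bil (alr i) (alr i))) • alr i + b • alr j := by
  rw [g.σ_simple, g.bil_combo]
  have hci : g.bil (alr i) (alr i) ≠ 0 := ne_of_gt (g.bil_diag_pos i)
  have hscal : 2 * (a * g.bil (alr i) (alr i) + b * g.bil (alr i) (alr j)) / g.bil (alr i) (alr i)
      = 2*a + 2*b*(g.bil (alr i) (alr j))/(g.bil (alr i) (alr i)) := by field_simp
  rw [hscal]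
  module

/-- `M i j ≠ 0` whenever `i ≠ j`, since `W` is finite. -/
lemma M_ne_zero (i j : B) (hij : i ≠ j) : g.M i j ≠ 0 := by
  intro h0
  have hci := g.bil_diag_pos i
  have hcj := g.bil_diag_pos j
  set ci := g.bil (alr i) (alr i) with hcidef
  set cj := g.bil (alr j) (alr j) with hcjdef
  set κ := g.bil (alr i) (alr j) with hκdef
  have hκs : g.bil (alr j) (alr i) = κ := g.bil_symm (alr j) (alr i)
  have hκ : κ = -Real.sqrt (ci * cj) := by
    have h := g.bil_offdiag i j hij
    rw [h0] at h
    simpa using h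
  have hκneg : κ < 0 := by
    rw [hκ, neg_lt, neg_zero]
    exact Real.sqrt_pos.mpr (mul_pos hci hcj)
  have hκ2 : κ * κ = ci * cj := by
    rw [hκ]
    rw [neg_mul_neg, Real.mul_self_sqrt (mul_pos hci hcj).le]
  have key : ∀ n : ℕ, g.σ ((g.cs.simple i * g.cs.simple j)^n) (alr i)
      = (2*(n:ℝ)+1) • alr i + (-(2*(n:ℝ)) * ci / κ) • alr j := by
    intro n
    induction n with
    | zero => simp
    | succ n ih =>
        rw [pow_succ', g.sigma_mul_apply, ih, g.sigma_mul_apply]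
        have e1 : (2*(n:ℝ)+1) • alr i + (-(2*(n:ℝ)) * ci / κ) • alr j
            = (-(2*(n:ℝ)) * ci / κ) • alr j + (2*(n:ℝ)+1) • alr i := by abel
        rw [e1, g.sigma_simple_combo j i, hκs]
        have e2 : (-(-(2*(n:ℝ)) * ci / κ) - 2*(2*(n:ℝ)+1)*κ/cj) • alr j + (2*(n:ℝ)+1) • alr i
            = (2*(n:ℝ)+1) • alr i + (-(-(2*(n:ℝ)) * ci / κ) - 2*(2*(n:ℝ)+1)*κ/cj) • alr j := by
          abel
        rw [e2, g.sigma_simple_combo i j]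
        have hcine : ci ≠ 0 := ne_of_gt hci
        have hcjne : cj ≠ 0 := ne_of_gt hcj
        have hκne : κ ≠ 0 := ne_of_lt hκneg
        have hA : (-(2*(n:ℝ)+1) - 2*(-(-(2*(n:ℝ)) * ci / κ) - 2*(2*(n:ℝ)+1)*κ/cj)*κ/ci)
            = 2*(n+1:ℝ)+1 := by
          field_simp
          linear_combination (4*(2*(n:ℝ)+1)) * hκ2
        have hB : (-(-(2*(n:ℝ)) * ci / κ) - 2*(2*(n:ℝ)+1)*κ/cj) = -(2*((n:ℝ)+1)) * ci / κ := by
          field_simp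
          linear_combination (-(2*(n:ℝ)+1)) * hκ2
        rw [hA, hB]
        push_cast
        ring_nf
  -- now use finiteness
  have : IsOfFinOrder (g.cs.simple i * g.cs.simple j) := by
    have := g.finW
    exact isOfFinOrder_of_finite _
  have hN := this.orderOf_pos
  have h1 := key (orderOf (g.cs.simple i * g.cs.simple j))
  rw [pow_orderOf_eq_one, map_one] at h1
  have h2 := congrFun h1 i
  have h3 : (1:ℝ) = (2*(orderOf (g.cs.simple i * g.cs.simple j) : ℝ)+1) * 1
      + (-(2*(orderOf (g.cs.simple i * g.cs.simple j):ℝ)) * ci / κ) * 0 := by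
    simpa [alr_self, alr_ne j i hij] using h2
  have h4 : (0:ℝ) < (orderOf (g.cs.simple i * g.cs.simple j) : ℝ) := by exact_mod_cast hN
  linarith

end GeomCoxeterSystem

/-- `sin (k θ) / sin θ`. -/
noncomputable def sinRatio (θ : ℝ) (k : ℕ) : ℝ := Real.sin (k * θ) / Real.sin θ

lemma sinRatio_zero (θ : ℝ) : sinRatio θ 0 = 0 := by simp [sinRatio]

lemma sinRatio_one {θ : ℝ} (h : Real.sin θ ≠ 0) : sinRatio θ 1 = 1 := by
  simp [sinRatio, div_self h]

lemma sinRatio_rec (θ : ℝ) (k : ℕ) :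
    sinRatio θ (k+2) = 2 * Real.cos θ * sinRatio θ (k+1) - sinRatio θ k := by
  unfold sinRatio
  have h1 : ((k:ℝ)+2) * θ = ((k+1:ℝ) * θ) + θ := by ring
  have h2 : (k:ℝ) * θ = ((k+1:ℝ) * θ) - θ := by ring
  push_cast
  rw [h1, h2, Real.sin_add, Real.sin_sub]
  field_simp
  ring

namespace GeomCoxeterSystem

variable {B : Type} [Fintype B] [DecidableEq B] {W : Type} [Group W] (g : GeomCoxeterSystem B W)

lemma theta_pos (i j : B) (hij : i ≠ j) : 0 < Real.pi / (g.M i j : ℝ) := by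
  have h0 := g.M_ne_zero i j hij
  have : (0:ℝ) < (g.M i j : ℝ) := by
    have : 0 < g.M i j := Nat.pos_of_ne_zero h0
    exact_mod_cast this
  exact div_pos Real.pi_pos this

lemma theta_le (i j : B) (hij : i ≠ j) : Real.pi / (g.M i j : ℝ) ≤ Real.pi / 2 := by
  have h0 := g.M_ne_zero i j hij
  have h1 := g.M.off_diagonal i j hij
  have h2 : (2:ℝ) ≤ (g.M i j : ℝ) := by
    have : 2 ≤ g.M i j := by omega
    exact_mod_cast this
  apply div_le_div_of_nonneg_left Real.pi_pos.le (by norm_num) h2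

lemma sin_theta_pos (i j : B) (hij : i ≠ j) : 0 < Real.sin (Real.pi / (g.M i j : ℝ)) := by
  apply Real.sin_pos_of_pos_of_lt_pi (g.theta_pos i j hij)
  calc Real.pi / (g.M i j : ℝ) ≤ Real.pi / 2 := g.theta_le i j hij
  _ < Real.pi := by linarith [Real.pi_pos]

lemma cos_theta_nonneg (i j : B) (hij : i ≠ j) : 0 ≤ Real.cos (Real.pi / (g.M i j : ℝ)) := by
  apply Real.cos_nonneg_of_mem_Icc
  constructor
  · linarith [g.theta_pos i j hij, Real.pi_pos]
  · exact g.theta_le i j hij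

lemma sigma_alt_word (i j : B) (hij : i ≠ j) (n : ℕ) (hn : n + 1 ≤ g.M i j) :
    g.σ (g.cs.wordProd (CoxeterSystem.alternatingWord i j n)) (alr i)
      = (if Even n then sinRatio (Real.pi / (g.M i j : ℝ)) (n+1)
          else sinRatio (Real.pi / (g.M i j : ℝ)) n) • alr i
        + ((if Even n then sinRatio (Real.pi / (g.M i j : ℝ)) n
          else sinRatio (Real.pi / (g.M i j : ℝ)) (n+1))
            * (Real.sqrt (g.bil (alr i) (alr i) * g.bil (alr j) (alr j))
                / g.bil (alr j) (alr j))) • alr j := by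
  set θ := Real.pi / (g.M i j : ℝ) with hθ
  set ci := g.bil (alr i) (alr i) with hcidef
  set cj := g.bil (alr j) (alr j) with hcjdef
  have hci := g.bil_diag_pos i
  have hcj := g.bil_diag_pos j
  have hsin := g.sin_theta_pos i j hij
  induction n with
  | zero =>
      have h0 : CoxeterSystem.alternatingWord i j 0 = ([] : List B) := rfl
      rw [h0, g.cs.wordProd_nil, map_one]
      simp [sinRatio_zero, sinRatio_one (ne_of_gt hsin)]
      rw [sinRatio_one (by rw [hθ]; exact ne_of_gt hsin), one_smul]
  | succ n ih =>
      have hn' : n + 1 ≤ g.M i j := by omega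
      have hκ : g.bil (alr i) (alr j) = -Real.cos θ * Real.sqrt (ci * cj) :=
        g.bil_offdiag i j hij
      have hκ' : g.bil (alr j) (alr i) = -Real.cos θ * Real.sqrt (ci * cj) := by
        rw [g.bil_symm]; exact hκ
      have hsq : Real.sqrt (ci*cj) * Real.sqrt (ci*cj) = ci * cj :=
        Real.mul_self_sqrt (mul_pos hci hcj).le
      have hcine : ci ≠ 0 := ne_of_gt hci
      have hcjne : cj ≠ 0 := ne_of_gt hcj
      have e21 : n + 1 + 1 = n + 2 := by omega
      rw [CoxeterSystem.alternatingWord_succ', g.cs.wordProd_cons, g.sigma_mul_apply,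
        ih hn']
      rcases Nat.even_or_odd n with he | ho
      · have hne : ¬ Even (n+1) := by simp [Nat.even_add_one, he]
        simp only [if_pos he, if_neg hne]
        rw [show (sinRatio θ (n+1)) • alr i
              + (sinRatio θ n * (Real.sqrt (ci*cj)/cj)) • alr j
            = (sinRatio θ n * (Real.sqrt (ci*cj)/cj)) • alr j
              + (sinRatio θ (n+1)) • alr i from by abel]
        rw [g.sigma_simple_combo j i, hκ']
        rw [show (-(sinRatio θ n * (Real.sqrt (ci*cj)/cj))
              - 2*(sinRatio θ (n+1))*(-Real.cos θ * Real.sqrt (ci * cj))/cj)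
            = sinRatio θ (n+1+1) * (Real.sqrt (ci*cj)/cj) from by
          rw [e21, sinRatio_rec]; ring]
        abel
      · have hel : ¬ Even n := by simpa [Nat.not_even_iff_odd] using ho
        have hne : Even (n+1) := by simpa [Nat.even_add_one] using hel
        simp only [if_neg hel, if_pos hne]
        rw [g.sigma_simple_combo i j, hκ]
        rw [show (-(sinRatio θ n)
              - 2*(sinRatio θ (n+1) * (Real.sqrt (ci*cj)/cj))*(-Real.cos θ * Real.sqrt (ci * cj))/ci)
            = sinRatio θ (n+1+1) from by
          rw [e21, sinRatio_rec]
          have h2 : Real.sqrt ci^2 * Real.sqrt cj^2 = Real.sqrt (ci*cj)^2 := by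
            rw [Real.sq_sqrt hci.le, Real.sq_sqrt hcj.le, Real.sq_sqrt (mul_pos hci hcj).le]
          field_simp
          linear_combination (2*(sinRatio θ (n+1))*Real.cos θ) * hsq]

end GeomCoxeterSystem

section ListAux

variable {A : Type}

lemma mem_alternatingWord_cases (i j x : A) :
    ∀ n, x ∈ CoxeterSystem.alternatingWord i j n → x = i ∨ x = j := by
  intro n
  induction n with
  | zero => intro h; simp [CoxeterSystem.alternatingWord] at h
  | succ n ih =>
      intro h
      rw [CoxeterSystem.alternatingWord_succ'] at h
      rcases List.mem_cons.mp h with h | h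
      · rcases Nat.even_or_odd n with hp | hp
        · simp only [if_pos hp] at h; exact Or.inr h
        · simp only [if_neg (Nat.not_even_iff_odd.mpr hp)] at h; exact Or.inl h
      · exact ih h

lemma alternatingWord_add' (i j : A) (n : ℕ) :
    ∀ k, CoxeterSystem.alternatingWord i j (k + n)
      = CoxeterSystem.alternatingWord (if Even n then i else j) (if Even n then j else i) k
        ++ CoxeterSystem.alternatingWord i j n := by
  intro k
  induction k with
  | zero =>
      have h0 : CoxeterSystem.alternatingWord (if Even n then i else j)
          (if Even n then j else i) 0 = ([] : List A) := rfl
      rw [Nat.zero_add, h0, List.nil_append]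
  | succ k ih =>
      have e : k + 1 + n = (k + n) + 1 := by omega
      rw [e, CoxeterSystem.alternatingWord_succ', ih, CoxeterSystem.alternatingWord_succ',
        ← List.cons_append]
      congr 1
      rcases Nat.even_or_odd n with hn | hn <;> rcases Nat.even_or_odd k with hk | hk <;>
        simp [Nat.even_add, hn, hk, Nat.not_even_iff_odd.mpr]

lemma exists_dup_of_not_chain' :
    ∀ (ω : List A), ¬ List.Chain' (· ≠ ·) ω → ∃ l₁ x l₂, ω = l₁ ++ x :: x :: l₂
  | [], h => absurd List.isChain_nil h
  | [x], h => absurd (List.isChain_singleton x) h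
  | x :: y :: t, h => by
      by_cases hxy : x = y
      · exact ⟨[], x, t, by rw [hxy]; rfl⟩
      · have h2 : ¬ List.Chain' (· ≠ ·) (y :: t) := fun hc => h (List.isChain_cons_cons.mpr ⟨hxy, hc⟩)
        obtain ⟨l₁, z, l₂, hd⟩ := exists_dup_of_not_chain' (y :: t) h2
        exact ⟨x :: l₁, z, l₂, by rw [hd]; rfl⟩

lemma chain_alternating (i j : A) (hij : i ≠ j) (ω : List A)
    (hmem : ∀ x ∈ ω, x = i ∨ x = j) (hch : List.Chain' (· ≠ ·) ω) :
    ∃ a b : A, ((a = i ∧ b = j) ∨ (a = j ∧ b = i))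
      ∧ ω = CoxeterSystem.alternatingWord a b ω.length := by
  induction ω with
  | nil => exact ⟨i, j, Or.inl ⟨rfl, rfl⟩, rfl⟩
  | cons x ω ih =>
      have hmem' : ∀ y ∈ ω, y = i ∨ y = j := fun y hy => hmem y (List.mem_cons_of_mem x hy)
      have hch' : List.Chain' (· ≠ ·) ω := hch.tail
      have hx0 : x = i ∨ x = j := hmem x (List.mem_cons_self)
      obtain ⟨a, b, htag, h⟩ := ih hmem' hch'
      have hab : a ≠ b := by rcases htag with ⟨rfl, rfl⟩ | ⟨rfl, rfl⟩ <;> [exact hij; exact hij.symm]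
      have hx1 : x = a ∨ x = b := by
        rcases htag with ⟨rfl, rfl⟩ | ⟨rfl, rfl⟩
        · exact hx0
        · exact hx0.symm
      cases ω with
      | nil =>
          rcases hx0 with h1 | h1
          · exact ⟨j, i, Or.inr ⟨rfl, rfl⟩, by rw [h1]; show [i] = CoxeterSystem.alternatingWord j i 1; rfl⟩
          · exact ⟨i, j, Or.inl ⟨rfl, rfl⟩, by rw [h1]; show [j] = CoxeterSystem.alternatingWord i j 1; rfl⟩
      | cons y t =>
          refine ⟨a, b, htag, ?_⟩
          have hxy : x ≠ y := (List.isChain_cons_cons.mp hch).1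
          have h' : y :: t = CoxeterSystem.alternatingWord a b (t.length + 1) := by
            simpa using h
          have hy : y = if Even t.length then b else a := by
            rw [CoxeterSystem.alternatingWord_succ'] at h'
            exact (List.cons_eq_cons.mp h').1
          have hx : x = if Even (t.length + 1) then b else a := by
            rcases Nat.even_or_odd t.length with hp | hp
            · rw [if_pos hp] at hy
              rw [if_neg (by simp [Nat.even_add_one, hp])]
              rcases hx1 with rfl | rfl
              · rfl
              · exact absurd hy.symm hxy
            · rw [if_neg (Nat.not_even_iff_odd.mpr hp)] at hy
              rw [if_pos (by simp [Nat.even_add_one, Nat.not_even_iff_odd.mpr hp])]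
              rcases hx1 with rfl | rfl
              · exact absurd hy.symm hxy
              · rfl
          have hlen : (x :: y :: t).length = t.length + 1 + 1 := rfl
          rw [hlen, CoxeterSystem.alternatingWord_succ', ← h', ← hx]

end ListAux

namespace GeomCoxeterSystem

variable {B : Type} [Fintype B] [DecidableEq B] {W : Type} [Group W] (g : GeomCoxeterSystem B W)

lemma M_two_le (i j : B) (hij : i ≠ j) : 2 ≤ g.M i j := by
  have h0 := g.M_ne_zero i j hij
  have h1 := g.M.off_diagonal i j hij
  omega

lemma sinRatio_nonneg' (i j : B) (hij : i ≠ j) (k : ℕ) (hk : k ≤ g.M i j) :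
    0 ≤ sinRatio (Real.pi / (g.M i j : ℝ)) k := by
  have hsin := g.sin_theta_pos i j hij
  have hθ := g.theta_pos i j hij
  apply div_nonneg _ hsin.le
  apply Real.sin_nonneg_of_nonneg_of_le_pi
  · positivity
  · have hm : (0:ℝ) < (g.M i j : ℝ) := by
      have := g.M_two_le i j hij
      exact_mod_cast Nat.lt_of_lt_of_le Nat.zero_lt_two this
    calc (k:ℝ) * (Real.pi / (g.M i j : ℝ))
        ≤ (g.M i j : ℝ) * (Real.pi / (g.M i j : ℝ)) := by
          apply mul_le_mul_of_nonneg_right _ hθ.le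
          exact_mod_cast hk
      _ = Real.pi := by field_simp

lemma sigma_alt_word_cone (i j : B) (hij : i ≠ j) (n : ℕ) (hn : n + 1 ≤ g.M i j) :
    ∃ a b : ℝ, 0 ≤ a ∧ 0 ≤ b ∧
      g.σ (g.cs.wordProd (CoxeterSystem.alternatingWord i j n)) (alr i)
        = a • alr i + b • alr j := by
  refine ⟨_, _, ?_, ?_, g.sigma_alt_word i j hij n hn⟩
  · split
    · exact g.sinRatio_nonneg' i j hij (n+1) hn
    · exact g.sinRatio_nonneg' i j hij n (by omega)
  · apply mul_nonneg
    · split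
      · exact g.sinRatio_nonneg' i j hij n (by omega)
      · exact g.sinRatio_nonneg' i j hij (n+1) hn
    · exact div_nonneg (Real.sqrt_nonneg _) (g.bil_diag_pos j).le

lemma dihedral_cone_or_reduce (i j : B) (hij : i ≠ j) :
    ∀ (N : ℕ) (ω : List B), ω.length ≤ N → (∀ x ∈ ω, x = i ∨ x = j) →
    (∃ a b : ℝ, 0 ≤ a ∧ 0 ≤ b ∧ g.σ (g.cs.wordProd ω) (alr i) = a • alr i + b • alr j)
    ∨ (∃ ω₁ : List B, (∀ x ∈ ω₁, x = i ∨ x = j) ∧ ω₁.length + 1 ≤ ω.length ∧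
        g.cs.wordProd ω₁ = g.cs.wordProd ω * g.cs.simple i) := by
  intro N
  induction N with
  | zero =>
      intro ω hl _
      have : ω = [] := List.length_eq_zero_iff.mp (Nat.le_zero.mp hl)
      subst this
      left
      exact ⟨1, 0, zero_le_one, le_refl 0, by simp⟩
  | succ N ihN =>
      intro ω hl hmem
      by_cases hch : List.Chain' (· ≠ ·) ω
      · obtain ⟨a, b, htag, hω⟩ := chain_alternating i j hij ω hmem hch
        rcases htag with ⟨ha, hb⟩ | ⟨ha, hb⟩ <;> rw [ha, hb] at hω
        · -- ω = alternatingWord i j L, ends with j (or empty)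
          by_cases hL : ω.length + 1 ≤ g.M i j
          · left
            rw [hω]
            exact g.sigma_alt_word_cone i j hij ω.length hL
          · -- braid reduction
            right
            have hm2 := g.M_two_le i j hij
            have hmL : g.M i j ≤ ω.length := by omega
            obtain ⟨m', hm'⟩ : ∃ m', g.M i j = m' + 1 := ⟨g.M i j - 1, by omega⟩
            set k := ω.length - g.M i j with hk
            have hsplit : ω.length = k + g.M i j := by omega
            refine ⟨CoxeterSystem.alternatingWord
                (if Even (g.M i j) then i else j) (if Even (g.M i j) then j else i) k
                ++ CoxeterSystem.alternatingWord i j m', ?_, ?_, ?_⟩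
            · intro x hx
              rcases List.mem_append.mp hx with hx | hx
              · rcases mem_alternatingWord_cases _ _ x k hx with rfl | rfl <;> split <;> simp
              · exact mem_alternatingWord_cases _ _ x m' hx
            · rw [List.length_append, CoxeterSystem.length_alternatingWord,
                CoxeterSystem.length_alternatingWord]
              omega
            · have e1 : ω = CoxeterSystem.alternatingWord
                  (if Even (g.M i j) then i else j) (if Even (g.M i j) then j else i) k
                  ++ CoxeterSystem.alternatingWord i j (g.M i j) := by
                rw [hω, hsplit, alternatingWord_add']
              have e2 : g.cs.wordProd (CoxeterSystem.alternatingWord i j (g.M i j))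
                  = g.cs.wordProd (CoxeterSystem.alternatingWord i j m') * g.cs.simple i := by
                have hbraid : g.cs.wordProd (CoxeterSystem.alternatingWord i j (g.M i j))
                    = g.cs.wordProd (CoxeterSystem.alternatingWord j i (g.M j i)) :=
                  g.cs.wordProd_braidWord_eq i j
                rw [g.M.symmetric j i] at hbraid
                rw [hbraid, hm', CoxeterSystem.alternatingWord_succ,
                  g.cs.wordProd_concat]
              rw [e1, g.cs.wordProd_append, g.cs.wordProd_append, e2, ← mul_assoc,
                mul_assoc, mul_assoc, g.cs.simple_mul_simple_self, mul_one]
        · -- ω = alternatingWord j i L, ends with i (or empty)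
          cases' Nat.eq_zero_or_pos ω.length with h0 hpos
          · left
            have : ω = [] := List.length_eq_zero_iff.mp h0
            subst this
            exact ⟨1, 0, zero_le_one, le_refl 0, by simp⟩
          · right
            obtain ⟨L', hL'⟩ : ∃ L', ω.length = L' + 1 := ⟨ω.length - 1, by omega⟩
            refine ⟨CoxeterSystem.alternatingWord i j L', ?_, by
              rw [CoxeterSystem.length_alternatingWord]; omega, ?_⟩
            · intro x hx; exact mem_alternatingWord_cases _ _ x L' hx
            · rw [hω, hL', CoxeterSystem.alternatingWord_succ, g.cs.wordProd_concat,
                mul_assoc, g.cs.simple_mul_simple_self, mul_one]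
      · obtain ⟨l₁, x, l₂, rfl⟩ := exists_dup_of_not_chain' _ hch
        have hmem2 : ∀ y ∈ l₁ ++ l₂, y = i ∨ y = j := by
          intro y hy
          apply hmem
          rcases List.mem_append.mp hy with hy | hy
          · exact List.mem_append.mpr (Or.inl hy)
          · exact List.mem_append.mpr (Or.inr (by simp [hy]))
        have hlen2 : (l₁ ++ l₂).length ≤ N := by
          simp only [List.length_append] at hl ⊢
          simp only [List.length_cons] at hl
          omega
        have hprod : g.cs.wordProd (l₁ ++ x :: x :: l₂) = g.cs.wordProd (l₁ ++ l₂) := by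
          rw [g.cs.wordProd_append, g.cs.wordProd_append, g.cs.wordProd_cons,
            g.cs.wordProd_cons, g.cs.simple_mul_simple_cancel_left]
        rcases ihN (l₁ ++ l₂) hlen2 hmem2 with ⟨a, b, ha, hb, hcone⟩ | ⟨ω₁, hw1, hw2, hw3⟩
        · left
          exact ⟨a, b, ha, hb, by rw [hprod]; exact hcone⟩
        · right
          refine ⟨ω₁, hw1, ?_, by rw [hprod]; exact hw3⟩
          simp only [List.length_append, List.length_cons] at *
          omega

end GeomCoxeterSystem

namespace GeomCoxeterSystem

variable {B : Type} [Fintype B] [DecidableEq B] {W : Type} [Group W] (g : GeomCoxeterSystem B W)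

lemma alr_mem_posRoots (i : B) : alr i ∈ g.posRoots := by
  refine ⟨g.alr_mem_roots i, fun s => ?_⟩
  rw [alr_apply]
  split <;> norm_num

/-- Humphreys, Theorem 5.4: if `ℓ(w sᵢ) > ℓ(w)` then `w(αᵢ)` is a positive root. -/
lemma ascent_pos_aux :
    ∀ (n : ℕ) (w : W) (i : B), g.cs.length w ≤ n →
      g.cs.length (w * g.cs.simple i) = g.cs.length w + 1 →
      g.σ w (alr i) ∈ g.posRoots := by
  intro n
  induction n with
  | zero =>
      intro w i hl _
      have hw : w = 1 := g.cs.length_eq_zero_iff.mp (Nat.le_zero.mp hl)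
      subst hw
      rw [map_one]
      exact g.alr_mem_posRoots i
  | succ n ihn =>
      intro w i hl hls
      by_cases hw1 : w = 1
      · subst hw1; rw [map_one]; exact g.alr_mem_posRoots i
      obtain ⟨t, ht⟩ := g.cs.exists_rightDescent_of_ne_one hw1
      have htlen : g.cs.length (w * g.cs.simple t) + 1 = g.cs.length w :=
        g.cs.isRightDescent_iff.mp ht
      have hit : i ≠ t := by
        intro h
        rw [h] at hls
        omega
      -- minimal decomposition
      have hPex : ∃ d : ℕ, ∃ (u : W) (ω : List B), (∀ x ∈ ω, x = i ∨ x = t)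
          ∧ w = u * g.cs.wordProd ω ∧ g.cs.length w = g.cs.length u + ω.length
          ∧ g.cs.length u = d := by
        refine ⟨g.cs.length (w * g.cs.simple t), w * g.cs.simple t, [t],
          by simp, ?_, ?_, rfl⟩
        · rw [g.cs.wordProd_singleton, mul_assoc, g.cs.simple_mul_simple_self, mul_one]
        · simp only [List.length_singleton]
          omega
      classical
      obtain ⟨u, ω, hmem, hdecomp, hadd, hmin⟩ := Nat.find_spec hPex
      have hud : Nat.find hPex ≤ g.cs.length (w * g.cs.simple t) :=
        Nat.find_le ⟨w * g.cs.simple t, [t], by simp, by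
          rw [g.cs.wordProd_singleton, mul_assoc, g.cs.simple_mul_simple_self, mul_one], by
          simp only [List.length_singleton]; omega, rfl⟩
      have hclaim : ∀ x : B, (x = i ∨ x = t) →
          g.cs.length (u * g.cs.simple x) = g.cs.length u + 1 := by
        intro x hx
        rcases g.cs.length_mul_simple u x with h | h
        · exact h
        · exfalso
          refine Nat.find_min hPex
            (show g.cs.length (u * g.cs.simple x) < Nat.find hPex by omega) ?_
          refine ⟨u * g.cs.simple x, x :: ω, ?_, ?_, ?_, rfl⟩
          · intro y hy
            rcases List.mem_cons.mp hy with rfl | hy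
            · exact hx
            · exact hmem y hy
          · rw [g.cs.wordProd_cons, ← mul_assoc, mul_assoc (u * g.cs.simple x),
              ← g.cs.wordProd_cons, g.cs.wordProd_cons, ← mul_assoc,
              mul_assoc u, g.cs.simple_mul_simple_self, mul_one]
            exact hdecomp
          · simp only [List.length_cons]
            omega
      have hlu : g.cs.length u ≤ n := by omega
      have hui := ihn u i hlu (hclaim i (Or.inl rfl))
      have hut := ihn u t hlu (hclaim t (Or.inr rfl))
      rcases g.dihedral_cone_or_reduce i t hit ω.length ω le_rfl hmem with
        ⟨a, b, ha, hb, hcone⟩ | ⟨ω₁, hm1, hl1, hp1⟩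
      · have hval : g.σ w (alr i) = a • g.σ u (alr i) + b • g.σ u (alr t) := by
          rw [hdecomp, g.sigma_mul_apply, hcone, map_add, map_smul, map_smul]
        refine ⟨g.sigma_mem_roots (g.alr_mem_roots i) w, fun s => ?_⟩
        rw [hval]
        have h1 := hui.2 s
        have h2 := hut.2 s
        simp only [Pi.add_apply, Pi.smul_apply, smul_eq_mul]
        nlinarith
      · exfalso
        have hle : g.cs.length (w * g.cs.simple i) ≤ g.cs.length u + ω₁.length := by
          rw [hdecomp, mul_assoc, ← hp1]
          calc g.cs.length (u * g.cs.wordProd ω₁)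
              ≤ g.cs.length u + g.cs.length (g.cs.wordProd ω₁) := g.cs.length_mul_le _ _
            _ ≤ g.cs.length u + ω₁.length := by
                have := g.cs.length_wordProd_le ω₁
                omega
        omega

lemma ascent_pos {w : W} {i : B} (h : g.cs.length (w * g.cs.simple i) = g.cs.length w + 1) :
    g.σ w (alr i) ∈ g.posRoots :=
  g.ascent_pos_aux (g.cs.length w) w i le_rfl h

lemma descent_neg {w : W} {i : B}
    (h : g.cs.length (w * g.cs.simple i) + 1 = g.cs.length w) :
    -(g.σ w (alr i)) ∈ g.posRoots := by
  have h' : g.cs.length ((w * g.cs.simple i) * g.cs.simple i)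
      = g.cs.length (w * g.cs.simple i) + 1 := by
    rw [g.cs.simple_mul_simple_cancel_right]
    omega
  have := g.ascent_pos h'
  rw [g.sigma_mul_apply, g.sigma_simple_self, map_neg] at this
  exact this

lemma pos_neg_zero {v : B → ℝ} (h1 : v ∈ g.posRoots) (h2 : -v ∈ g.posRoots) : False := by
  have hz : v = 0 := by
    funext s
    have := h1.2 s
    have h3 := h2.2 s
    simp only [Pi.neg_apply] at h3
    simp only [Pi.zero_apply]
    linarith
  exact g.root_ne_zero h1.1 hz

/-- the length criterion. -/
lemma ascent_iff_pos (w : W) (i : B) :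
    g.cs.length (w * g.cs.simple i) = g.cs.length w + 1 ↔ g.σ w (alr i) ∈ g.posRoots := by
  constructor
  · exact fun h => g.ascent_pos h
  · intro h
    rcases g.cs.length_mul_simple w i with h' | h'
    · exact h'
    · exact absurd (g.descent_neg h') (fun h2 => g.pos_neg_zero h h2)

lemma descent_iff_neg (w : W) (i : B) :
    g.cs.length (w * g.cs.simple i) + 1 = g.cs.length w ↔ -(g.σ w (alr i)) ∈ g.posRoots := by
  constructor
  · exact fun h => g.descent_neg h
  · intro h
    rcases g.cs.length_mul_simple w i with h' | h'
    · exact absurd h (fun h2 => g.pos_neg_zero (g.ascent_pos h') h2)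
    · exact h'

/-- dichotomy: every root is positive or negative. -/
lemma root_pos_or_neg {γ : B → ℝ} (hγ : γ ∈ g.roots) :
    γ ∈ g.posRoots ∨ -γ ∈ g.posRoots := by
  obtain ⟨w, i, rfl⟩ := (g.mem_roots_iff _).1 hγ
  rcases g.cs.length_mul_simple w i with h | h
  · exact Or.inl (g.ascent_pos h)
  · exact Or.inr (g.descent_neg h)

/-- faithfulness of the geometric representation. -/
lemma sigma_injective : Function.Injective g.σ := by
  intro w w' h
  by_contra hne
  have h1 : w⁻¹ * w' ≠ 1 := by
    intro h2
    exact hne (inv_mul_eq_one.mp h2)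
  obtain ⟨t, ht⟩ := g.cs.exists_rightDescent_of_ne_one h1
  have htlen := g.cs.isRightDescent_iff.mp ht
  have hneg := g.descent_neg htlen
  have hσ1 : g.σ (w⁻¹ * w') = 1 := by
    rw [map_mul, map_inv, h]
    group
  rw [hσ1] at hneg
  have hpos := g.alr_mem_posRoots t
  exact g.pos_neg_zero hpos (by simpa using hneg)

end GeomCoxeterSystem

set_option maxHeartbeats 1000000

namespace GeomCoxeterSystem

variable {B : Type} [Fintype B] [DecidableEq B] {W : Type} [Group W] (g : GeomCoxeterSystem B W)

/-- If two simple reflections are conjugate, the corresponding vertices are joined by a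
path of odd-labelled edges in the Coxeter diagram. -/
lemma exists_odd_path_of_conj (b t : B) (u : W)
    (h : u * g.cs.simple t * u⁻¹ = g.cs.simple b) :
    Relation.ReflTransGen (fun x y => Odd (g.M x y)) b t := by
  classical
  by_contra hnot
  set O : Set B := {a | Relation.ReflTransGen (fun x y => Odd (g.M x y)) b a} with hO
  have hsymmrel : Symmetric (fun x y : B => Odd (g.M x y)) := by
    intro x y hxy
    have := g.M.symmetric x y
    rwa [this] at hxy
  have hOiff : ∀ a a', Odd (g.M a a') → (a ∈ O ↔ a' ∈ O) := by
    intro a a' hodd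
    constructor
    · exact fun ha => Relation.ReflTransGen.tail ha hodd
    · exact fun ha => Relation.ReflTransGen.tail ha (hsymmrel hodd)
  set f : B → Multiplicative (ZMod 2) :=
    fun a => Multiplicative.ofAdd (if a ∈ O then 1 else 0) with hf
  have hlift : CoxeterMatrix.IsLiftable g.M f := by
    intro a a'
    have hmul : f a * f a'
        = Multiplicative.ofAdd ((if a ∈ O then (1: ZMod 2) else 0)
            + (if a' ∈ O then (1: ZMod 2) else 0)) := rfl
    rcases Nat.even_or_odd (g.M a a') with hev | hodd
    · rw [hmul, ← ofAdd_nsmul]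
      have : (g.M a a') • ((if a ∈ O then (1: ZMod 2) else 0)
          + (if a' ∈ O then (1: ZMod 2) else 0)) = 0 := by
        rw [nsmul_eq_mul]
        have h2 : ((g.M a a' : ℕ) : ZMod 2) = 0 := by
          rw [ZMod.natCast_eq_zero_iff]
          exact hev.two_dvd
        rw [h2, zero_mul]
      rw [this]
      rfl
    · have hiff := hOiff a a' hodd
      have hz : (if a ∈ O then (1: ZMod 2) else 0) + (if a' ∈ O then (1: ZMod 2) else 0)
          = 0 := by
        by_cases ha : a ∈ O
        · rw [if_pos ha, if_pos (hiff.mp ha)]; decide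
        · rw [if_neg ha, if_neg (fun h' => ha (hiff.mpr h'))]; decide
      rw [hmul, hz, ← ofAdd_nsmul]
      rw [smul_zero]
      rfl
  set φ := g.cs.lift ⟨f, hlift⟩ with hφ
  have h1 : φ (g.cs.simple b) = f b := g.cs.lift_apply_simple hlift b
  have h2 : φ (g.cs.simple t) = f t := g.cs.lift_apply_simple hlift t
  have h3 : φ (g.cs.simple b) = φ (g.cs.simple t) := by
    rw [← h, map_mul, map_mul, map_inv]
    rw [mul_comm (φ u) (φ (g.cs.simple t)), mul_assoc, mul_inv_cancel, mul_one]
  rw [h1, h2] at h3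
  have hbO : b ∈ O := Relation.ReflTransGen.refl
  have htO : t ∉ O := hnot
  rw [hf] at h3
  simp only [if_pos hbO, if_neg htO] at h3
  have h4 : (1 : ZMod 2) = 0 := Multiplicative.ofAdd.injective h3
  simp at h4

/-- Along an odd-labelled edge, the crystallographic normalization forces equal lengths. -/
lemma bil_diag_eq_of_odd (hcr : g.IsCrystallographic) (a a' : B) (hodd : Odd (g.M a a')) :
    g.bil (alr a) (alr a) = g.bil (alr a') (alr a') := by
  by_cases haa : a = a'
  · rw [haa]
  have hca := g.bil_diag_pos a
  have hca' := g.bil_diag_pos a'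
  set ca := g.bil (alr a) (alr a) with hcadef
  set ca' := g.bil (alr a') (alr a') with hca'def
  have hm2 := g.M_two_le a a' haa
  have hm3 : 3 ≤ g.M a a' := by
    rcases hodd with ⟨k, hk⟩; omega
  set θ := Real.pi / (g.M a a' : ℝ) with hθdef
  have hθpos := g.theta_pos a a' haa
  have hmR : (3:ℝ) ≤ (g.M a a' : ℝ) := by exact_mod_cast hm3
  have hθle3 : θ ≤ Real.pi / 3 :=
    div_le_div_of_nonneg_left Real.pi_pos.le (by norm_num) hmR
  have hθlt2 : θ < Real.pi / 2 := lt_of_le_of_lt hθle3 (by linarith [Real.pi_pos])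
  have hcos_pos : 0 < Real.cos θ :=
    Real.cos_pos_of_mem_Ioo ⟨by linarith, hθlt2⟩
  have hcos_lt1 : Real.cos θ < 1 := by
    have := Real.cos_lt_cos_of_nonneg_of_le_pi (le_refl 0) (by linarith [Real.pi_pos]) hθpos
    simpa using this
  obtain ⟨k1, hk1⟩ := hcr _ (g.alr_mem_roots a) _ (g.alr_mem_roots a')
  obtain ⟨k2, hk2⟩ := hcr _ (g.alr_mem_roots a') _ (g.alr_mem_roots a)
  have hbil : g.bil (alr a) (alr a') = -Real.cos θ * Real.sqrt (ca * ca') :=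
    g.bil_offdiag a a' haa
  have hbil2 : g.bil (alr a') (alr a) = -Real.cos θ * Real.sqrt (ca * ca') := by
    rw [g.bil_symm]
    exact hbil
  have hsq : Real.sqrt (ca * ca') * Real.sqrt (ca * ca') = ca * ca' :=
    Real.mul_self_sqrt (mul_pos hca hca').le
  have hsqpos : 0 < Real.sqrt (ca * ca') := Real.sqrt_pos.mpr (mul_pos hca hca')
  have hk1' : (k1 : ℝ) * ca = 2 * (-Real.cos θ * Real.sqrt (ca * ca')) := by
    rw [← hbil]
    rw [div_eq_iff hca.ne'] at hk1
    linarith [hk1]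
  have hk2' : (k2 : ℝ) * ca' = 2 * (-Real.cos θ * Real.sqrt (ca * ca')) := by
    rw [← hbil2]
    rw [div_eq_iff hca'.ne'] at hk2
    linarith [hk2]
  have hk1neg : (k1 : ℝ) < 0 := by
    have hrhs : 2 * (-Real.cos θ * Real.sqrt (ca * ca')) < 0 := by nlinarith
    nlinarith
  have hk2neg : (k2 : ℝ) < 0 := by
    have hrhs : 2 * (-Real.cos θ * Real.sqrt (ca * ca')) < 0 := by nlinarith
    nlinarith
  have hprod : ((k1 * k2 : ℤ) : ℝ) = 4 * Real.cos θ ^ 2 := by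
    have h5 : (k1:ℝ) * ca * ((k2:ℝ) * ca') = (2 * (-Real.cos θ * Real.sqrt (ca * ca')))^2 := by
      rw [hk1', hk2']; ring
    have h6 : (2 * (-Real.cos θ * Real.sqrt (ca * ca')))^2
        = (4 * Real.cos θ^2) * (ca * ca') := by
      linear_combination (4 * Real.cos θ^2) * hsq
    have h7 : ((k1:ℝ) * (k2:ℝ)) * (ca * ca') = (4 * Real.cos θ^2) * (ca * ca') := by
      rw [← h6, ← h5]; ring
    have hne : ca * ca' ≠ 0 := (mul_pos hca hca').ne'
    push_cast
    exact mul_right_cancel₀ hne h7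
  have hcases : g.M a a' = 3 ∨ g.M a a' = 5 ∨ 7 ≤ g.M a a' := by
    rcases hodd with ⟨k, hk⟩; omega
  rcases hcases with hm | hm | hm
  · -- m = 3
    have hθ3 : θ = Real.pi / 3 := by rw [hθdef, hm]; norm_num
    have hcos : Real.cos θ = 1/2 := by rw [hθ3, Real.cos_pi_div_three]
    have hprod1 : ((k1 * k2 : ℤ) : ℝ) = 1 := by rw [hprod, hcos]; norm_num
    have hprodZ : k1 * k2 = 1 := by exact_mod_cast hprod1
    have hk1Z : k1 < 0 := by exact_mod_cast hk1neg
    rcases Int.mul_eq_one_iff_eq_one_or_neg_one.mp hprodZ with ⟨h1, h2⟩ | ⟨h1, h2⟩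
    · omega
    · rw [h1] at hk1'
      rw [h2] at hk2'
      push_cast at hk1' hk2'
      linarith
  · -- m = 5 : impossible
    exfalso
    have hθ5 : θ = Real.pi / 5 := by rw [hθdef, hm]; norm_num
    have hcos : Real.cos θ = (1 + Real.sqrt 5) / 4 := by rw [hθ5, Real.cos_pi_div_five]
    have hs5 : Real.sqrt 5 * Real.sqrt 5 = 5 := Real.mul_self_sqrt (by norm_num)
    have hs5pos : 0 ≤ Real.sqrt 5 := Real.sqrt_nonneg 5
    have hs5lb : (2:ℝ) < Real.sqrt 5 := by nlinarith
    have hs5ub : Real.sqrt 5 < 3 := by nlinarith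
    have hlb : (2:ℝ) < ((k1 * k2 : ℤ) : ℝ) := by rw [hprod, hcos]; nlinarith
    have hub : ((k1 * k2 : ℤ) : ℝ) < 3 := by rw [hprod, hcos]; nlinarith
    have hlbZ : (2:ℤ) < k1 * k2 := by exact_mod_cast hlb
    have hubZ : k1 * k2 < 3 := by exact_mod_cast hub
    omega
  · -- m ≥ 7 : impossible
    exfalso
    have hmR7 : (7:ℝ) ≤ (g.M a a' : ℝ) := by exact_mod_cast hm
    have hθ6 : θ < Real.pi / 6 := by
      rw [hθdef]
      apply div_lt_div_of_pos_left Real.pi_pos (by norm_num)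
      linarith
    have hcos6 : Real.cos (Real.pi / 6) < Real.cos θ := by
      apply Real.cos_lt_cos_of_nonneg_of_le_pi hθpos.le _ hθ6
      linarith [Real.pi_pos]
    rw [Real.cos_pi_div_six] at hcos6
    have hs3 : Real.sqrt 3 * Real.sqrt 3 = 3 := Real.mul_self_sqrt (by norm_num)
    have hs3pos : 0 ≤ Real.sqrt 3 := Real.sqrt_nonneg 3
    have hlb : (3:ℝ) < ((k1 * k2 : ℤ) : ℝ) := by rw [hprod]; nlinarith
    have hub : ((k1 * k2 : ℤ) : ℝ) < 4 := by rw [hprod]; nlinarith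
    have hlbZ : (3:ℤ) < k1 * k2 := by exact_mod_cast hlb
    have hubZ : k1 * k2 < 4 := by exact_mod_cast hub
    omega

end GeomCoxeterSystem

namespace GeomCoxeterSystem

variable {B : Type} [Fintype B] [DecidableEq B] {W : Type} [Group W] (g : GeomCoxeterSystem B W)

lemma bil_diag_eq_of_path (hcr : g.IsCrystallographic) {b t : B}
    (hp : Relation.ReflTransGen (fun x y => Odd (g.M x y)) b t) :
    g.bil (alr b) (alr b) = g.bil (alr t) (alr t) := by
  induction hp with
  | refl => rfl
  | tail hp hstep ih => exact ih.trans (g.bil_diag_eq_of_odd hcr _ _ hstep)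

lemma root_parallel_simple (hcr : g.IsCrystallographic) (b : B) {γ : B → ℝ}
    (hγ : γ ∈ g.roots) (c : ℝ) (hpar : γ = c • alr b) : γ = alr b ∨ γ = -(alr b) := by
  obtain ⟨u, t, hut⟩ := (g.mem_roots_iff _).1 hγ
  have hcb := g.bil_diag_pos b
  have hct : g.bil (alr t) (alr t) = c^2 * g.bil (alr b) (alr b) := by
    have h1 : g.bil γ γ = g.bil (alr t) (alr t) := by rw [← hut, g.bil_sigma_eq]
    rw [hpar] at h1
    simp only [map_smul, LinearMap.smul_apply, smul_eq_mul] at h1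
    rw [← h1]; ring
  have hc0 : c ≠ 0 := by
    intro h
    rw [h, zero_smul] at hpar
    exact g.root_ne_zero hγ hpar
  have hrefl : g.refl γ = u * g.cs.simple t * u⁻¹ := by rw [← hut]; exact g.refl_spec u t
  have hmaps : g.σ (g.refl γ) = g.σ (g.cs.simple b) := by
    apply LinearEquiv.toLinearMap_injective
    apply LinearMap.ext
    intro v
    have h1 : g.σ (g.refl γ) v = v - (2 * g.bil γ v / g.bil γ γ) • γ :=
      g.sigma_refl_apply hγ v
    have h2 : g.σ (g.cs.simple b) v
        = v - (2 * g.bil (alr b) v / g.bil (alr b) (alr b)) • alr b := g.σ_simple b v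
    show g.σ (g.refl γ) v = g.σ (g.cs.simple b) v
    rw [h1, h2, hpar]
    congr 1
    rw [smul_smul]
    congr 1
    simp only [map_smul, LinearMap.smul_apply, smul_eq_mul]
    field_simp
  have hconj : u * g.cs.simple t * u⁻¹ = g.cs.simple b := by
    apply g.sigma_injective
    rw [← hrefl]
    exact hmaps
  have hpath := g.exists_odd_path_of_conj b t u hconj
  have heq := g.bil_diag_eq_of_path hcr hpath
  have hc2 : c^2 = 1 := by
    rw [← heq] at hct
    have h3 := mul_left_cancel₀ (ne_of_gt hcb) (show g.bil (alr b) (alr b) * 1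
      = g.bil (alr b) (alr b) * c^2 by rw [mul_one, mul_comm (g.bil (alr b) (alr b)) (c^2)]; exact hct)
    exact h3.symm
  have : (c - 1) * (c + 1) = 0 := by linear_combination hc2
  rcases mul_eq_zero.mp this with h | h
  · left; rw [hpar, show c = 1 by linarith, one_smul]
  · right; rw [hpar, show c = -1 by linarith]; module

lemma neg_alr_not_pos (i : B) : -(alr i) ∉ g.posRoots := by
  intro h
  have := h.2 i
  simp [alr_self] at this
  linarith

lemma simple_perm_pos (hcr : g.IsCrystallographic) (i : B) {γ : B → ℝ}
    (hγ : γ ∈ g.posRoots) (hne : γ ≠ alr i) :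
    g.σ (g.cs.simple i) γ ∈ g.posRoots := by
  have hroot : γ ∈ g.roots := hγ.1
  have hex : ∃ s', s' ≠ i ∧ 0 < γ s' := by
    by_contra hno
    push_neg at hno
    have hzero : ∀ s', s' ≠ i → γ s' = 0 := fun s' h => le_antisymm (hno s' h) (hγ.2 s')
    have hform : γ = (γ i) • alr i := by
      funext s'
      by_cases h : s' = i
      · subst h; simp
      · simp [hzero s' h, alr_ne i s' h]
    rcases g.root_parallel_simple hcr i hroot (γ i) hform with h | h
    · exact hne h
    · rw [h] at hγ
      exact g.neg_alr_not_pos i hγ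
  obtain ⟨s', hs'i, hs'pos⟩ := hex
  have himg : g.σ (g.cs.simple i) γ ∈ g.roots := g.sigma_mem_roots hroot _
  rcases g.root_pos_or_neg himg with h | h
  · exact h
  · exfalso
    have hcoord : g.σ (g.cs.simple i) γ s' = γ s' := by
      rw [g.σ_simple]
      simp [alr_ne i s' hs'i]
    have h2 := h.2 s'
    rw [Pi.neg_apply, hcoord] at h2
    linarith

lemma roots_finite : g.roots.Finite := by
  have := g.finW
  exact Set.finite_range _

lemma posRoots_subset : g.posRoots ⊆ g.roots := fun γ h => h.1

lemma posRoots_finite : g.posRoots.Finite := g.roots_finite.subset g.posRoots_subset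

/-- The (right) inversion set of `w`. -/
def invSet (w : W) : Set (B → ℝ) := {γ | γ ∈ g.posRoots ∧ g.σ w γ ∉ g.posRoots}

lemma invSet_subset (w : W) : g.invSet w ⊆ g.posRoots := fun γ h => h.1

lemma invSet_finite (w : W) : (g.invSet w).Finite :=
  g.posRoots_finite.subset (g.invSet_subset w)

lemma sigma_simple_invol (i : B) (v : B → ℝ) :
    g.σ (g.cs.simple i) (g.σ (g.cs.simple i) v) = v := by
  rw [← g.sigma_mul_apply, g.cs.simple_mul_simple_self, map_one]
  rfl

lemma invSet_ncard (hcr : g.IsCrystallographic) :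
    ∀ (n : ℕ) (w : W), g.cs.length w = n → (g.invSet w).ncard = n := by
  intro n
  induction n with
  | zero =>
      intro w hw
      have : w = 1 := g.cs.length_eq_zero_iff.mp hw
      subst this
      have : g.invSet (1 : W) = ∅ := by
        ext γ
        simp only [invSet, Set.mem_setOf_eq, Set.mem_empty_iff_false, iff_false]
        rintro ⟨h1, h2⟩
        rw [map_one] at h2
        exact h2 h1
      rw [this, Set.ncard_empty]
  | succ n ih =>
      intro w hw
      have hw1 : w ≠ 1 := by
        intro h; rw [h, g.cs.length_one] at hw; omega
      obtain ⟨t, ht⟩ := g.cs.exists_rightDescent_of_ne_one hw1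
      have htlen := g.cs.isRightDescent_iff.mp ht
      set w₁ := w * g.cs.simple t with hw₁
      have hrec : w = w₁ * g.cs.simple t := by
        rw [hw₁, g.cs.simple_mul_simple_cancel_right]
      have hl1 : g.cs.length w₁ = n := by omega
      have hasc : g.cs.length (w₁ * g.cs.simple t) = g.cs.length w₁ + 1 := by
        rw [← hrec]; omega
      have hw1t_pos : g.σ w₁ (alr t) ∈ g.posRoots := g.ascent_pos hasc
      have halr_not : alr t ∉ g.invSet w₁ := by
        intro h
        have h2 := h.2
        exact h2 hw1t_pos
      have hsigma_w : ∀ γ, g.σ w γ = g.σ w₁ (g.σ (g.cs.simple t) γ) := by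
        intro γ
        rw [hrec, g.sigma_mul_apply]
      have hclaim : g.invSet w
          = insert (alr t) ((g.σ (g.cs.simple t)) '' (g.invSet w₁)) := by
        ext γ
        constructor
        · rintro ⟨hpos, hneg⟩
          by_cases hγt : γ = alr t
          · rw [hγt]; exact Set.mem_insert _ _
          · apply Set.mem_insert_of_mem
            refine ⟨g.σ (g.cs.simple t) γ, ⟨g.simple_perm_pos hcr t hpos hγt, ?_⟩,
              g.sigma_simple_invol t γ⟩
            rw [← hsigma_w]
            exact hneg
        · intro h
          rcases Set.mem_insert_iff.mp h with rfl | ⟨δ, hδ, rfl⟩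
          · refine ⟨g.alr_mem_posRoots t, ?_⟩
            rw [hsigma_w, g.sigma_simple_self, map_neg]
            intro hcontra
            exact g.pos_neg_zero hw1t_pos hcontra
          · have hδt : δ ≠ alr t := by
              intro h2; rw [h2] at hδ; exact halr_not hδ
            refine ⟨g.simple_perm_pos hcr t hδ.1 hδt, ?_⟩
            rw [hsigma_w, g.sigma_simple_invol]
            exact hδ.2
      have hnotmem : alr t ∉ (g.σ (g.cs.simple t)) '' (g.invSet w₁) := by
        rintro ⟨δ, hδ, him⟩
        have : δ = g.σ (g.cs.simple t) (alr t) := by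
          rw [← him, g.sigma_simple_invol]
        rw [g.sigma_simple_self] at this
        rw [this] at hδ
        exact g.neg_alr_not_pos t (g.invSet_subset w₁ hδ)
      rw [hclaim, Set.ncard_insert_of_notMem hnotmem
        (((g.invSet_finite w₁).image _)),
        Set.ncard_image_of_injective _ (g.σ (g.cs.simple t)).injective,
        ih w₁ hl1]

/-- `(ρ, α_b∨) = 1`, i.e. `2 (ρ, α_b) = (α_b, α_b)`. -/
lemma two_bil_rho (hcr : g.IsCrystallographic) (b : B) :
    2 * g.bil g.rho (alr b) = g.bil (alr b) (alr b) := by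
  classical
  have hfin := g.posRoots_finite
  set T : Finset (B → ℝ) := hfin.toFinset with hT
  have hcoe : (T : Set (B → ℝ)) = g.posRoots := hfin.coe_toFinset
  have hSsum : g.rho = (2⁻¹ : ℝ) • ∑ γ ∈ T, γ := by
    rw [rho]
    congr 1
    rw [← hcoe, finsum_mem_coe_finset]
  have hbT : alr b ∈ T := by
    rw [hT, Set.Finite.mem_toFinset]
    exact g.alr_mem_posRoots b
  -- the reflection permutes T \ {alr b}
  have hperm : ∑ γ ∈ T.erase (alr b), g.σ (g.cs.simple b) γ
      = ∑ γ ∈ T.erase (alr b), γ := by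
    apply Finset.sum_nbij' (i := fun γ => g.σ (g.cs.simple b) γ)
      (j := fun γ => g.σ (g.cs.simple b) γ)
    · intro γ hγ
      rw [Finset.mem_erase] at hγ ⊢
      obtain ⟨hne, hmem⟩ := hγ
      rw [Set.Finite.mem_toFinset hfin] at hmem
      constructor
      · intro h
        have : γ = g.σ (g.cs.simple b) (alr b) := by rw [← h, g.sigma_simple_invol]
        rw [g.sigma_simple_self] at this
        rw [this] at hmem
        exact g.neg_alr_not_pos b hmem
      · rw [Set.Finite.mem_toFinset hfin]
        exact g.simple_perm_pos hcr b hmem hne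
    · intro γ hγ
      rw [Finset.mem_erase] at hγ ⊢
      obtain ⟨hne, hmem⟩ := hγ
      rw [Set.Finite.mem_toFinset hfin] at hmem
      constructor
      · intro h
        have : γ = g.σ (g.cs.simple b) (alr b) := by rw [← h, g.sigma_simple_invol]
        rw [g.sigma_simple_self] at this
        rw [this] at hmem
        exact g.neg_alr_not_pos b hmem
      · rw [Set.Finite.mem_toFinset hfin]
        exact g.simple_perm_pos hcr b hmem hne
    · intro γ _; exact g.sigma_simple_invol b γ
    · intro γ _; exact g.sigma_simple_invol b γ
    · intro γ _; rfl
  have e1 : g.σ (g.cs.simple b) (alr b) + ∑ γ ∈ T.erase (alr b), g.σ (g.cs.simple b) γ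
      = ∑ γ ∈ T, g.σ (g.cs.simple b) γ :=
    Finset.add_sum_erase T (fun γ => g.σ (g.cs.simple b) γ) hbT
  have e2 : alr b + ∑ γ ∈ T.erase (alr b), γ = ∑ γ ∈ T, γ :=
    Finset.add_sum_erase T (fun γ => γ) hbT
  have hsum : g.σ (g.cs.simple b) (∑ γ ∈ T, γ) = (∑ γ ∈ T, γ) - (2:ℝ) • alr b := by
    calc g.σ (g.cs.simple b) (∑ γ ∈ T, γ)
        = ∑ γ ∈ T, g.σ (g.cs.simple b) γ := map_sum _ _ _
      _ = g.σ (g.cs.simple b) (alr b) + ∑ γ ∈ T.erase (alr b), g.σ (g.cs.simple b) γ :=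
          e1.symm
      _ = -(alr b) + ∑ γ ∈ T.erase (alr b), γ := by rw [g.sigma_simple_self, hperm]
      _ = (∑ γ ∈ T, γ) - (2:ℝ) • alr b := by rw [← e2]; module
  have hrho : g.σ (g.cs.simple b) g.rho = g.rho - alr b := by
    rw [hSsum, map_smul, hsum]
    rw [smul_sub]
    congr 1
    rw [smul_smul]
    norm_num
  have hrho2 : g.σ (g.cs.simple b) g.rho
      = g.rho - (2 * g.bil (alr b) g.rho / g.bil (alr b) (alr b)) • alr b := g.σ_simple b g.rho
  have heval : (g.rho - alr b) b
      = (g.rho - (2 * g.bil (alr b) g.rho / g.bil (alr b) (alr b)) • alr b) b := by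
    rw [← hrho, ← hrho2]
  simp only [Pi.sub_apply, Pi.smul_apply, alr_self, smul_eq_mul, mul_one] at heval
  have hcb := g.bil_diag_pos b
  have h2 : 2 * g.bil (alr b) g.rho = g.bil (alr b) (alr b) := by
    field_simp at heval
    linarith
  rw [g.bil_symm]
  exact h2

end GeomCoxeterSystem

lemma pi_decomp {B : Type} [Fintype B] [DecidableEq B] (v : B → ℝ) :
    ∑ b : B, v b • alr b = v := by
  funext x
  rw [Finset.sum_apply]
  simp only [Pi.smul_apply, GeomCoxeterSystem.alr_apply, smul_eq_mul, mul_ite, mul_one, mul_zero]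
  rw [Finset.sum_ite_eq Finset.univ x (fun b => v b)]
  simp

open GeomCoxeterSystem

/-- For a parabolic subsystem `(W',S')` of a finite
crystallographic Coxeter system `(W,S)`, the extended Bruhat graph `Γ(W',S')` is a
subgraph of `Γ(W,S)` (both ordinary and quantum arrows are preserved); moreover any
quantum arrow of `Γ(W,S)` between elements of `W'` is labelled by a root of `Δ'` and
already belongs to `Γ(W',S')`. -/
theorem parabolic_extended_bruhat_graph
    {B B' : Type} [Fintype B] [DecidableEq B] [Fintype B'] [DecidableEq B']
    {W W' : Type} [Group W] [Group W']
    (g : GeomCoxeterSystem B W) (g' : GeomCoxeterSystem B' W')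
    (hcr : g.IsCrystallographic)
    (ι : B' → B) (hι : Function.Injective ι)
    (hM : ∀ s t : B', g'.M s t = g.M (ι s) (ι t))
    (f : W' →* W) (hf : Function.Injective f)
    (hsimple : ∀ s : B', f (g'.cs.simple s) = g.cs.simple (ι s))
    (ext : (B' → ℝ) →ₗ[ℝ] (B → ℝ))
    (hext : ∀ v : B' → ℝ, ext v = ∑ b' : B', v b' • alr (ι b'))
    (hbil : ∀ u v : B' → ℝ, g.bil (ext u) (ext v) = g'.bil u v)
    (hσ : ∀ (w : W') (v : B' → ℝ), ext (g'.σ w v) = g.σ (f w) (ext v)) :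
    (∀ v w : W',
      (g'.coverArrow v w → g.coverArrow (f v) (f w)) ∧
      (∀ γ' : B' → ℝ, g'.qArrow γ' v w → g.qArrow (ext γ') (f v) (f w))) ∧
    (∀ (v w : W') (γ : B → ℝ), g.qArrow γ (f v) (f w) →
      ∃ γ' : B' → ℝ, γ = ext γ' ∧ g'.qArrow γ' v w) := by
  classical
  -- basic transfer lemmas
  have hext_alr : ∀ b' : B', ext (alr b') = alr (ι b') := by
    intro b'
    rw [hext]
    rw [Finset.sum_eq_single b' (fun c _ hc => by rw [alr_ne b' c hc, zero_smul])
      (fun h => absurd (Finset.mem_univ b') h)]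
    rw [alr_self, one_smul]
  have hext_ι : ∀ (v : B' → ℝ) (b' : B'), ext v (ι b') = v b' := by
    intro v b'
    rw [hext, Finset.sum_apply]
    rw [Finset.sum_eq_single b' (fun c _ hc => by
        simp only [Pi.smul_apply, smul_eq_mul]
        rw [alr_ne (ι c) (ι b') (fun h => hc (hι h).symm), mul_zero])
      (fun h => absurd (Finset.mem_univ b') h)]
    simp only [Pi.smul_apply, smul_eq_mul]
    rw [alr_self, mul_one]
  have hext_nran : ∀ (v : B' → ℝ) (b : B), (∀ b', b ≠ ι b') → ext v b = 0 := by
    intro v b hb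
    rw [hext, Finset.sum_apply]
    apply Finset.sum_eq_zero
    intro c _
    simp only [Pi.smul_apply, smul_eq_mul]
    rw [alr_ne (ι c) b (hb c), mul_zero]
  have hext_inj : Function.Injective ext := by
    intro u v h
    funext b'
    rw [← hext_ι u b', ← hext_ι v b', h]
  have hext_root : ∀ {γ' : B' → ℝ}, γ' ∈ g'.roots → ext γ' ∈ g.roots := by
    intro γ' hγ'
    obtain ⟨u, t', hut⟩ := (g'.mem_roots_iff _).1 hγ'
    rw [← hut, hσ, hext_alr]
    exact g.sigma_mem_roots (g.alr_mem_roots (ι t')) (f u)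
  have hext_pos : ∀ {γ' : B' → ℝ}, γ' ∈ g'.posRoots → ext γ' ∈ g.posRoots := by
    intro γ' h
    refine ⟨hext_root h.1, fun b => ?_⟩
    by_cases hb : ∃ b', b = ι b'
    · obtain ⟨b', rfl⟩ := hb
      rw [hext_ι]
      exact h.2 b'
    · push_neg at hb
      rw [hext_nran γ' b hb]
  have hpos_back : ∀ {γ' : B' → ℝ}, γ' ∈ g'.roots → ext γ' ∈ g.posRoots →
      γ' ∈ g'.posRoots := by
    intro γ' hroot hpos
    refine ⟨hroot, fun b' => ?_⟩
    have h2 := hpos.2 (ι b')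
    rwa [hext_ι] at h2
  have hrefl : ∀ {γ' : B' → ℝ}, γ' ∈ g'.roots → f (g'.refl γ') = g.refl (ext γ') := by
    intro γ' hγ'
    obtain ⟨u, t', hut⟩ := (g'.mem_roots_iff _).1 hγ'
    rw [← hut, g'.refl_spec u t', hσ, hext_alr, g.refl_spec (f u) (ι t'),
      map_mul, map_mul, map_inv, hsimple]
  have hcr' : g'.IsCrystallographic := by
    intro γ' h1 δ' h2
    obtain ⟨k, hk⟩ := hcr _ (hext_root h1) _ (hext_root h2)
    exact ⟨k, by rw [← hbil, ← hbil]; exact hk⟩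
  have hE : ∀ w' : W', g.cs.length (f w') = g'.cs.length w' := by
    have key : ∀ (n : ℕ) (w' : W'), g'.cs.length w' = n → g.cs.length (f w') = n := by
      intro n
      induction n with
      | zero =>
          intro w' hw'
          rw [g'.cs.length_eq_zero_iff.mp hw', map_one, g.cs.length_one]
      | succ n ih =>
          intro w' hw'
          have hne : w' ≠ 1 := by
            intro h
            rw [h, g'.cs.length_one] at hw'
            omega
          obtain ⟨t', ht'⟩ := g'.cs.exists_rightDescent_of_ne_one hne
          have htlen := g'.cs.isRightDescent_iff.mp ht'
          have hneg' : -(g'.σ w' (alr t')) ∈ g'.posRoots := g'.descent_neg (by omega)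
          have hneg : -(g.σ (f w') (alr (ι t'))) ∈ g.posRoots := by
            have h2 : ext (-(g'.σ w' (alr t'))) = -(g.σ (f w') (alr (ι t'))) := by
              rw [map_neg, hσ, hext_alr]
            rw [← h2]
            exact hext_pos hneg'
          have hdesc : g.cs.length (f w' * g.cs.simple (ι t')) + 1 = g.cs.length (f w') :=
            (g.descent_iff_neg (f w') (ι t')).mpr hneg
          have hmul : f w' * g.cs.simple (ι t') = f (w' * g'.cs.simple t') := by
            rw [map_mul, hsimple]
          rw [hmul] at hdesc
          have := ih (w' * g'.cs.simple t') (by omega)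
          omega
    exact fun w' => key _ w' rfl
  have hdiag : ∀ b' : B', g.bil (alr (ι b')) (alr (ι b')) = g'.bil (alr b') (alr b') := by
    intro b'
    rw [← hext_alr, hbil]
  have hrho : ∀ γ' : B' → ℝ, g.bil g.rho (ext γ') = g'.bil g'.rho γ' := by
    intro γ'
    have hdec : ext γ' = ∑ b' : B', γ' b' • alr (ι b') := hext γ'
    have hdec' : (γ' : B' → ℝ) = ∑ b' : B', γ' b' • alr b' := (pi_decomp γ').symm
    rw [hdec, map_sum]
    conv_rhs => rw [hdec', map_sum]
    apply Finset.sum_congr rfl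
    intro b' _
    rw [map_smul, map_smul, smul_eq_mul, smul_eq_mul]
    congr 1
    have h1 := g.two_bil_rho hcr (ι b')
    have h2 := g'.two_bil_rho hcr' b'
    have h3 := hdiag b'
    linarith
  have hpairRho : ∀ γ' : B' → ℝ, g.pairRho (ext γ') = g'.pairRho γ' := by
    intro γ'
    simp only [GeomCoxeterSystem.pairRho]
    rw [hrho γ', hbil γ' γ']
  have hinv : ∀ w' : W', g.invSet (f w') = ext '' (g'.invSet w') := by
    intro w'
    have hsub : ext '' (g'.invSet w') ⊆ g.invSet (f w') := by
      rintro _ ⟨δ', hδ', rfl⟩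
      refine ⟨hext_pos hδ'.1, ?_⟩
      intro hcon
      apply hδ'.2
      have hroot' : g'.σ w' δ' ∈ g'.roots := g'.sigma_mem_roots hδ'.1.1 w'
      apply hpos_back hroot'
      rw [hσ]
      exact hcon
    have hfin1 := g.invSet_finite (f w')
    have hc1 : (g.invSet (f w')).ncard = g'.cs.length w' := by
      rw [g.invSet_ncard hcr _ (f w') rfl, hE w']
    have hc2 : (ext '' (g'.invSet w')).ncard = g'.cs.length w' := by
      rw [Set.ncard_image_of_injective _ hext_inj, g'.invSet_ncard hcr' _ w' rfl]
    exact (Set.eq_of_subset_of_ncard_le hsub (by rw [hc1, hc2]) hfin1).symm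
  refine ⟨fun v w => ⟨?_, ?_⟩, ?_⟩
  · rintro ⟨γ', hγpos, hvw, hlen⟩
    refine ⟨ext γ', hext_pos hγpos, ?_, ?_⟩
    · rw [hvw, map_mul, hrefl hγpos.1]
    · rw [hE w, hE v, hlen]
  · rintro γ' ⟨hγpos, hvw, hlen⟩
    refine ⟨hext_pos hγpos, ?_, ?_⟩
    · rw [hvw, map_mul, hrefl hγpos.1]
    · rw [hE w, hE v, hpairRho γ']
      exact_mod_cast hlen
  · rintro v w γ ⟨hγpos, hvw, hlen⟩
    have hγroot : γ ∈ g.roots := hγpos.1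
    have hr : g.refl γ = f (v⁻¹ * w) := by
      rw [map_mul, map_inv, hvw]
      group
    have hγinv : γ ∈ g.invSet (f (v⁻¹ * w)) := by
      refine ⟨hγpos, ?_⟩
      rw [← hr, g.sigma_refl_self hγroot]
      intro hcon
      exact g.pos_neg_zero hγpos hcon
    rw [hinv (v⁻¹ * w)] at hγinv
    obtain ⟨γ', hγ'inv, hγext⟩ := hγinv
    have hγ'pos : γ' ∈ g'.posRoots := hγ'inv.1
    refine ⟨γ', hγext.symm, hγ'pos, ?_, ?_⟩
    · apply hf
      rw [map_mul, hrefl hγ'pos.1, hγext, ← hvw]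
    · rw [← hE w, ← hE v, ← hpairRho γ', hγext]
      exact hlen
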